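/- arXiv:2210.04667 — 3 statements merged into one kernel-verified Lean document; each statement's English description precedes it below -/
import Mathlib

section
/- Assume Assumptions (I) and (II), R₀ < ∞ and R₀ > 𝔼[1/γ*], and suppose in addition that γ(t) = γ*·1{t ≥ ζ} for all t, where ζ is a random variable with ζ ≥ η a.s. and 𝔼[ζ] < ∞, and γ* is a random variable taking values in (0,1]. Then the unique positive solution F̄* of the equation ∫₀^∞ 𝔼[exp(−∫₀ˢ γ(r/F̄*) dr)] ds = R₀ is F̄* = (R₀ − 𝔼[1/γ*])/𝔼[ζ], and the corresponding endemic value Ī* := 𝔼[η]·F̄*/R₀ equals (𝔼[η]/𝔼[ζ])·(1 − 𝔼[1/γ*]/R₀). -/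
open MeasureTheory Filter Set ProbabilityTheory
open scoped ENNReal

noncomputable section

/-- A real function is càdlàg on `[0, ∞)`: right-continuous on `[0,∞)` with left limits. -/
def Cadlag (f : ℝ → ℝ) : Prop :=
  (∀ t : ℝ, 0 ≤ t → ContinuousWithinAt f (Set.Ici t) t) ∧
  (∀ t : ℝ, 0 < t → ∃ l : ℝ, Filter.Tendsto f (nhdsWithin t (Set.Iio t)) (nhds l))

variable {Ω : Type*} [MeasurableSpace Ω]

/-- `η(ω) = sup {t ≥ 0 : λ(ω,t) > 0}`, with the convention `sup ∅ = 0`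
(which is the junk value of `sSup` on `ℝ`). -/
def etaSup (lam : Ω → ℝ → ℝ) (ω : Ω) : ℝ :=
  sSup {t : ℝ | 0 ≤ t ∧ 0 < lam ω t}

/-- `γ* (ω) = lim_{t → ∞} γ(ω,t) = sup_{t ≥ 0} γ(ω,t)` for a.s. non-decreasing bounded `γ`. -/
def gamStar (gam : Ω → ℝ → ℝ) (ω : Ω) : ℝ :=
  sSup (gam ω '' Set.Ici (0:ℝ))

/-- `λ̄(t) = 𝔼[λ(t)]`. -/
def lamBar (P : Measure Ω) (lam : Ω → ℝ → ℝ) (t : ℝ) : ℝ :=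
  ∫ ω, lam ω t ∂P

/-- `Ī(0) = ℙ(η₀ > 0)`. -/
def IbarZero (P : Measure Ω) (lam0 : Ω → ℝ → ℝ) : ℝ :=
  (P {ω | 0 < etaSup lam0 ω}).toReal

/-- `λ̄₀(t) = 𝔼[λ₀(t) | η₀ > 0]`. -/
def lamBarZero (P : Measure Ω) (lam0 : Ω → ℝ → ℝ) (t : ℝ) : ℝ :=
  (∫ ω in {ω | 0 < etaSup lam0 ω}, lam0 ω t ∂P) / IbarZero P lam0

/-- `F₀ᶜ(t) = ℙ(η₀ > t | η₀ > 0)`. -/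
def FZeroc (P : Measure Ω) (lam0 : Ω → ℝ → ℝ) (t : ℝ) : ℝ :=
  (P {ω | t < etaSup lam0 ω}).toReal / IbarZero P lam0

/-- `Fᶜ(t) = ℙ(η > t)`. -/
def survFc (P : Measure Ω) (lam : Ω → ℝ → ℝ) (t : ℝ) : ℝ :=
  (P {ω | t < etaSup lam ω}).toReal

/-- `R₀ = ∫₀^∞ λ̄(t) dt`. -/
def Rnought (P : Measure Ω) (lam : Ω → ℝ → ℝ) : ℝ :=
  ∫ t in Set.Ioi (0:ℝ), lamBar P lam t

/-- `𝔼[1/γ*] ∈ (0,∞]`, with the convention `1/0 = ∞`. -/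
def EinvGamStar (P : Measure Ω) (gam : Ω → ℝ → ℝ) : ℝ≥0∞ :=
  ∫⁻ ω, (ENNReal.ofReal (gamStar gam ω))⁻¹ ∂P

/-- The pair of integral equations defining the limit epidemic system. -/
def SolvesLimitSystem (P : Measure Ω) (lam0 gam0 lam gam : Ω → ℝ → ℝ)
    (S F : ℝ → ℝ) : Prop :=
  (∀ t : ℝ, 0 ≤ t →
    S t = (∫ ω, gam0 ω t * Real.exp (- ∫ r in (0:ℝ)..t, gam0 ω r * F r) ∂P)
      + ∫ s in (0:ℝ)..t,
          (∫ ω, gam ω (t - s) * Real.exp (- ∫ r in s..t, gam ω (r - s) * F r) ∂P)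
            * (S s * F s)) ∧
  (∀ t : ℝ, 0 ≤ t →
    F t = IbarZero P lam0 * lamBarZero P lam0 t
      + ∫ s in (0:ℝ)..t, lamBar P lam (t - s) * (S s * F s))

/-- A solution of the limit epidemic system with càdlàg nonnegative components. -/
def IsLimitSolution (P : Measure Ω) (lam0 gam0 lam gam : Ω → ℝ → ℝ)
    (S F : ℝ → ℝ) : Prop :=
  Cadlag S ∧ Cadlag F ∧ (∀ t : ℝ, 0 ≤ t → 0 ≤ S t ∧ 0 ≤ F t) ∧
  SolvesLimitSystem P lam0 gam0 lam gam S F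

/-- The standing assumptions on the random infectivity/susceptibility functions:
measurability, càdlàg paths, the bounds `0 ≤ λ₀, λ ≤ λ*`, `0 ≤ γ₀, γ ≤ 1`, and the a.s.
support condition `sup{t : λ(t) > 0} ≤ inf{t : γ(t) > 0}` (for both pairs). -/
def BaseContext (P : Measure Ω) (lamStar : ℝ) (lam0 gam0 lam gam : Ω → ℝ → ℝ) : Prop :=
  0 < lamStar ∧
  Measurable (Function.uncurry lam0) ∧ Measurable (Function.uncurry gam0) ∧
  Measurable (Function.uncurry lam) ∧ Measurable (Function.uncurry gam) ∧
  (∀ᵐ ω ∂P, Cadlag (lam0 ω) ∧ Cadlag (gam0 ω) ∧ Cadlag (lam ω) ∧ Cadlag (gam ω)) ∧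
  (∀ᵐ ω ∂P, ∀ t : ℝ, 0 ≤ t →
    lam0 ω t ∈ Set.Icc 0 lamStar ∧ lam ω t ∈ Set.Icc 0 lamStar ∧
    gam0 ω t ∈ Set.Icc (0:ℝ) 1 ∧ gam ω t ∈ Set.Icc (0:ℝ) 1) ∧
  (∀ᵐ ω ∂P, ∀ s t : ℝ, 0 ≤ s → 0 ≤ t → 0 < lam ω s → 0 < gam ω t → s ≤ t) ∧
  (∀ᵐ ω ∂P, ∀ s t : ℝ, 0 ≤ s → 0 ≤ t → 0 < lam0 ω s → 0 < gam0 ω t → s ≤ t)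

/-- Assumption (I): `γ` and `γ₀` have a.s. non-decreasing paths, and `(λ₀, γ₀)` is built from
an independent pair `(λ̃, γ̃) ~ (λ, γ)`, an age `ξ ∈ [0, η̃]` and a Bernoulli variable `χ`
with `ℙ(χ = 1) = Ī(0)`, via `λ₀(t) = χ λ̃(t+ξ)` and `γ₀(t) = (1-χ) + χ γ̃(t+ξ)`. -/
def AssumptionI (P : Measure Ω) (lam0 gam0 lam gam : Ω → ℝ → ℝ) : Prop :=
  (∀ᵐ ω ∂P, MonotoneOn (gam ω) (Set.Ici 0) ∧ MonotoneOn (gam0 ω) (Set.Ici 0)) ∧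
  ∃ (lamT gamT : Ω → ℝ → ℝ) (xi chi : Ω → ℝ),
    Measurable (fun ω => (lamT ω, gamT ω)) ∧ Measurable xi ∧ Measurable chi ∧
    Measure.map (fun ω => (lamT ω, gamT ω)) P = Measure.map (fun ω => (lam ω, gam ω)) P ∧
    (∀ᵐ ω ∂P, 0 ≤ xi ω ∧ xi ω ≤ etaSup lamT ω) ∧
    (∀ ω, chi ω = 0 ∨ chi ω = 1) ∧
    P {ω | chi ω = 1} = P {ω | 0 < etaSup lam0 ω} ∧
    IndepFun chi (fun ω => (lamT ω, gamT ω, xi ω)) P ∧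
    (∀ᵐ ω ∂P, ∀ t : ℝ, 0 ≤ t →
      lam0 ω t = chi ω * lamT ω (t + xi ω) ∧
      gam0 ω t = (1 - chi ω) + chi ω * gamT ω (t + xi ω))

/-- Assumption (II): there is a nonnegative integrable random time `t*` such that a.s.
`γ(t) ≥ γ*/2` for all `t ≥ t*`. -/
def AssumptionII (P : Measure Ω) (gam : Ω → ℝ → ℝ) : Prop :=
  ∃ tstar : Ω → ℝ, Measurable tstar ∧ (∀ᵐ ω ∂P, 0 ≤ tstar ω) ∧ Integrable tstar P ∧
    ∀ᵐ ω ∂P, ∀ t : ℝ, tstar ω ≤ t → gamStar gam ω / 2 ≤ gam ω t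

/-- Assumption (III): `γ*` is deterministic, and for any `δ ∈ (0,1)` there is a deterministic
`t_δ > 0` with `min(γ₀(t_δ), γ(t_δ)) ≥ (1-δ) γ*` a.s. -/
def AssumptionIII (P : Measure Ω) (gam0 gam : Ω → ℝ → ℝ) : Prop :=
  (∃ c : ℝ, ∀ᵐ ω ∂P, gamStar gam ω = c) ∧
  (∀ δ : ℝ, δ ∈ Set.Ioo (0:ℝ) 1 → ∃ tδ : ℝ, 0 < tδ ∧
    ∀ᵐ ω ∂P, (1 - δ) * gamStar gam ω ≤ min (gam0 ω tδ) (gam ω tδ))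

/-- Assumption (IV): there is a positive decreasing `h` with `h(0) = 1` and
`λ̄(s+t) ≥ h(s) λ̄(t)`, `λ̄₀(s+t) ≥ h(s) λ̄₀(t)`; moreover `λ̄₀` is continuous. -/
def AssumptionIV (lamBarF lamBarZeroF : ℝ → ℝ) : Prop :=
  (∃ h : ℝ → ℝ, (∀ s : ℝ, 0 ≤ s → 0 < h s) ∧ AntitoneOn h (Set.Ici 0) ∧ h 0 = 1 ∧
    ∀ s t : ℝ, 0 ≤ s → 0 ≤ t →
      h s * lamBarF t ≤ lamBarF (s + t) ∧ h s * lamBarZeroF t ≤ lamBarZeroF (s + t)) ∧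
  ContinuousOn lamBarZeroF (Set.Ici 0)

/-- `H(x) = ∫₀^∞ 𝔼[exp(−∫₀ˢ γ(r/x) dr)] ds`. -/
def Hfun (P : Measure Ω) (gam : Ω → ℝ → ℝ) (x : ℝ) : ℝ :=
  ∫ s in Set.Ioi (0:ℝ), ∫ ω, Real.exp (- ∫ r in (0:ℝ)..s, gam ω (r / x)) ∂P

/-- `Ī(t) = Ī(0) F₀ᶜ(t) + ∫₀ᵗ Fᶜ(t-s) S̄(s) F̄(s) ds`. -/
def IbarFun (P : Measure Ω) (lam0 lam : Ω → ℝ → ℝ) (S F : ℝ → ℝ) (t : ℝ) : ℝ :=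
  IbarZero P lam0 * FZeroc P lam0 t
    + ∫ s in (0:ℝ)..t, survFc P lam (t - s) * (S s * F s)

/-- The SIRS integral system of the Kermack–McKendrick model (deterministic data). -/
def SolvesSIRSIntegral (lamT gamT muF Fcs I0 R0f : ℝ → ℝ) (S0 : ℝ)
    (S F : ℝ → ℝ) : Prop :=
  ∀ t : ℝ, 0 ≤ t →
    (S t = S0 * Real.exp (- ∫ r in (0:ℝ)..t, F r)
      + (∫ τ in (0:ℝ)..t, ∫ r in Set.Ioi (0:ℝ),
          gamT (t - τ) * muF (τ + r) * I0 r * Real.exp (- ∫ s in r..(τ + r), muF s)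
            * Real.exp (- ∫ s in τ..t, gamT (s - τ) * F s))
      + (∫ τ in Set.Ioi (0:ℝ),
          gamT (t + τ) * R0f τ * Real.exp (- ∫ s in (0:ℝ)..t, gamT (s + τ) * F s))
      + (∫ r in (0:ℝ)..t,
          (∫ τ in (0:ℝ)..(t - r),
            gamT (t - r - τ) * muF τ * Fcs τ
              * Real.exp (- ∫ s in (τ + r)..t, gamT (s - r - τ) * F s)) * (S r * F r))) ∧
    (F t = (∫ τ in Set.Ioi (0:ℝ), lamT (t + τ) * I0 τ * Real.exp (- ∫ s in τ..(t + τ), muF s))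
      + ∫ τ in (0:ℝ)..t, lamT (t - τ) * (S τ * F τ)
          * Real.exp (- ∫ s in (0:ℝ)..(t - τ), muF s))

/-- `Ī(t,τ)` built from a solution of the SIRS integral system. -/
def IbDef (I0 Fcs S F : ℝ → ℝ) (t τ : ℝ) : ℝ :=
  if t < τ then I0 (τ - t) * Fcs τ / Fcs (τ - t) else F (t - τ) * S (t - τ) * Fcs τ

/-- `R̄(t,0)` built from a solution of the SIRS integral system. -/
def RzeroDef (I0 fd Fcs S F : ℝ → ℝ) (t : ℝ) : ℝ :=
  (∫ τ in Set.Ioi (0:ℝ), I0 τ * fd (t + τ) / Fcs τ)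
    + ∫ τ in (0:ℝ)..t, fd (t - τ) * (S τ * F τ)

/-- `R̄(t,θ)` built from a solution of the SIRS integral system. -/
def RbDef (I0 R0f fd gamT Fcs S F : ℝ → ℝ) (t θ : ℝ) : ℝ :=
  if θ < t then
    RzeroDef I0 fd Fcs S F (t - θ) * Real.exp (- ∫ s in (0:ℝ)..θ, gamT s * F (t + s - θ))
  else R0f (θ - t) * Real.exp (- ∫ s in (θ - t)..θ, gamT s * F (t - θ + s))

/-- `S̄(t)` built from a solution of the SIRS integral system. -/
def SbDef (S0 : ℝ) (F : ℝ → ℝ) (t : ℝ) : ℝ :=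
  S0 * Real.exp (- ∫ r in (0:ℝ)..t, F r)



lemma aux_ite_integral (g c s : ℝ) (hc : 0 ≤ c) (hs : 0 ≤ s) :
    (∫ r in (0:ℝ)..s, (if c ≤ r then g else 0)) = g * max (s - c) 0 := by
  rw [intervalIntegral.integral_of_le hs]
  have hne : ∀ᵐ r : ℝ, r ≠ c := by
    rw [ae_iff]
    have : {r : ℝ | ¬ r ≠ c} = {c} := by ext r; simp
    rw [this]; exact Real.volume_singleton
  rw [setIntegral_congr_ae measurableSet_Ioc
    (hne.mono (fun r hr _ => ?_))]
  · rw [setIntegral_indicator measurableSet_Ioi, Set.Ioc_inter_Ioi,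
      setIntegral_const, max_eq_right hc, measureReal_def, Real.volume_Ioc, smul_eq_mul, mul_comm]
    rcases le_or_gt c s with h | h
    · rw [ENNReal.toReal_ofReal (by linarith), max_eq_left (by linarith)]
    · rw [ENNReal.ofReal_eq_zero.2 (by linarith), max_eq_right (by linarith)]
      simp
  · show (if c ≤ r then g else 0) = (Set.Ioi c).indicator (fun _ => g) r
    rw [Set.indicator_apply]
    by_cases h : c ≤ r
    · rw [if_pos h, if_pos (show r ∈ Set.Ioi c from lt_of_le_of_ne h (Ne.symm hr))]
    · rw [if_neg h, if_neg (show r ∉ Set.Ioi c from fun hm => h (le_of_lt hm))]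

lemma aux_exp_integrable (g c : ℝ) (hg : 0 < g) (hc : 0 ≤ c) :
    IntegrableOn (fun s : ℝ => Real.exp (-(g * max (s - c) 0))) (Set.Ioi 0) := by
  rw [← Set.Ioc_union_Ioi_eq_Ioi hc]
  refine IntegrableOn.union ?_ ?_
  · refine ((integrableOn_const_iff (C := (1:ℝ))).2 (Or.inr ?_)).congr_fun (fun r hr => ?_) measurableSet_Ioc
    · rw [Real.volume_Ioc]; exact ENNReal.ofReal_lt_top
    · rw [max_eq_right (by simpa using hr.2), mul_zero, neg_zero, Real.exp_zero]
  · have : IntegrableOn (fun s : ℝ => Real.exp (g * c) * Real.exp (-g * s)) (Set.Ioi c) :=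
      (exp_neg_integrableOn_Ioi c hg).const_mul _
    refine this.congr_fun (fun r hr => ?_) measurableSet_Ioi
    rw [max_eq_left (by simp at hr; linarith)]; dsimp only; rw [← Real.exp_add]
    ring_nf

lemma aux_exp_integral (g c : ℝ) (hg : 0 < g) (hc : 0 ≤ c) :
    (∫ s in Set.Ioi (0:ℝ), Real.exp (-(g * max (s - c) 0))) = c + g⁻¹ := by
  rw [← Set.Ioc_union_Ioi_eq_Ioi hc,
    setIntegral_union (Set.Ioc_disjoint_Ioi le_rfl) measurableSet_Ioi
      ((aux_exp_integrable g c hg hc).mono_set (by rw [← Set.Ioc_union_Ioi_eq_Ioi hc]; exact Set.subset_union_left))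
      ((aux_exp_integrable g c hg hc).mono_set (by rw [← Set.Ioc_union_Ioi_eq_Ioi hc]; exact Set.subset_union_right))]
  have h1 : (∫ s in Set.Ioc (0:ℝ) c, Real.exp (-(g * max (s - c) 0))) = c := by
    rw [setIntegral_congr_fun measurableSet_Ioc (g := fun _ => (1:ℝ))
      (fun r hr => by rw [max_eq_right (by simpa using hr.2), mul_zero, neg_zero, Real.exp_zero])]
    simp [Real.volume_Ioc, ENNReal.toReal_ofReal hc, hc]
  have h2 : (∫ s in Set.Ioi c, Real.exp (-(g * max (s - c) 0))) = g⁻¹ := by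
    rw [setIntegral_congr_fun measurableSet_Ioi (g := fun s => Real.exp (-(g * (s - c))))
      (fun r hr => by rw [max_eq_left (by simp at hr; linarith)])]
    have hderiv : ∀ y ∈ Set.Ici c, HasDerivAt (fun s => -(g⁻¹ * Real.exp (-(g * (s - c)))))
        (Real.exp (-(g * (y - c)))) y := by
      intro y _
      have h1 : HasDerivAt (fun s : ℝ => -(g * (s - c))) (-g) y := by
        simpa using (((hasDerivAt_id y).sub_const c).const_mul g).fun_neg
      have := (h1.exp.const_mul g⁻¹).fun_neg
      refine this.congr_deriv ?_
      field_simp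
    have hint : IntegrableOn (fun s => Real.exp (-(g * (s - c)))) (Set.Ioi c) := by
      have h0 : IntegrableOn (fun s : ℝ => Real.exp (g * c) * Real.exp (-g * s)) (Set.Ioi c) :=
        (exp_neg_integrableOn_Ioi c hg).const_mul _
      refine h0.congr_fun (fun r hr => ?_) measurableSet_Ioi
      dsimp only; rw [← Real.exp_add]; ring_nf
    have htend : Tendsto (fun s => -(g⁻¹ * Real.exp (-(g * (s - c))))) atTop (nhds 0) := by
      have h1 : Tendsto (fun s : ℝ => -(g * (s - c))) atTop atBot := by
        refine tendsto_neg_atBot_iff.2 ?_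
        exact (tendsto_atTop_add_const_right _ (-c) tendsto_id).const_mul_atTop hg
      have := ((Real.tendsto_exp_atBot.comp h1).const_mul g⁻¹).neg
      simpa using this
    rw [integral_Ioi_of_hasDerivAt_of_tendsto' hderiv hint htend]
    simp
  rw [h1, h2]

/-- When `γ(t) = γ* 1_{t ≥ ζ}` with `ζ ≥ η`, `𝔼[ζ] < ∞` and `γ* ∈ (0,1]`,
the unique positive solution of `∫₀^∞ 𝔼[exp(−∫₀ˢ γ(r/F̄*) dr)] ds = R₀` is
`F̄* = (R₀ − 𝔼[1/γ*]) / 𝔼[ζ]`, and `Ī* = 𝔼[η] F̄* / R₀ = (𝔼[η]/𝔼[ζ]) (1 − 𝔼[1/γ*]/R₀)`. -/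
theorem endemic_equilibrium_indicator_case
    {Ω : Type*} [MeasurableSpace Ω] (P : Measure Ω) [IsProbabilityMeasure P]
    (lamStar : ℝ) (lam0 gam0 lam gam : Ω → ℝ → ℝ)
    (hctx : BaseContext P lamStar lam0 gam0 lam gam)
    (hAI : AssumptionI P lam0 gam0 lam gam)
    (hAII : AssumptionII P gam)
    (hR0fin : IntegrableOn (lamBar P lam) (Set.Ioi 0))
    (hR0_gt : EinvGamStar P gam < ENNReal.ofReal (Rnought P lam))
    (gs zeta : Ω → ℝ) (hgs_meas : Measurable gs) (hzeta_meas : Measurable zeta)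
    (hgs_range : ∀ᵐ ω ∂P, gs ω ∈ Set.Ioc (0:ℝ) 1)
    (hzeta_ge : ∀ᵐ ω ∂P, etaSup lam ω ≤ zeta ω)
    (hzeta_int : Integrable zeta P)
    (hgam_eq : ∀ᵐ ω ∂P, ∀ t : ℝ, 0 ≤ t →
      gam ω t = gs ω * (if zeta ω ≤ t then 1 else 0))
    (Fstar : ℝ)
    (hFstar : Fstar = (Rnought P lam - (EinvGamStar P gam).toReal) / (∫ ω, zeta ω ∂P)) :
    0 < Fstar ∧
    Hfun P gam Fstar = Rnought P lam ∧
    (∀ y : ℝ, 0 < y → Hfun P gam y = Rnought P lam → y = Fstar) ∧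
    (∫ ω, etaSup lam ω ∂P) * Fstar / Rnought P lam
      = ((∫ ω, etaSup lam ω ∂P) / (∫ ω, zeta ω ∂P))
        * (1 - (EinvGamStar P gam).toReal / Rnought P lam) := by
  obtain ⟨hlamStar, hm0, hmg0, hmlam, hmgam, hcad, hbnd, hsupp, hsupp0⟩ := hctx
  set R := Rnought P lam with hR
  set Z := ∫ ω, zeta ω ∂P with hZ
  set E := (EinvGamStar P gam).toReal with hE
  have hzeta0 : ∀ᵐ ω ∂P, 0 ≤ zeta ω := by
    filter_upwards [hzeta_ge] with ω h
    exact le_trans (Real.sSup_nonneg (fun t ht => ht.1)) h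
  have hgamStar : ∀ᵐ ω ∂P, gamStar gam ω = gs ω := by
    filter_upwards [hgs_range, hzeta0, hgam_eq] with ω hg hz hgam
    refine IsGreatest.csSup_eq ⟨⟨zeta ω, hz, ?_⟩, ?_⟩
    · rw [hgam _ hz, if_pos le_rfl, mul_one]
    · rintro y ⟨t, ht, rfl⟩
      rw [hgam t ht]
      by_cases h : zeta ω ≤ t
      · rw [if_pos h, mul_one]
      · rw [if_neg h, mul_zero]; exact hg.1.le
  have hEinv : EinvGamStar P gam = ∫⁻ ω, ENNReal.ofReal ((gs ω)⁻¹) ∂P := by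
    refine lintegral_congr_ae ?_
    filter_upwards [hgamStar, hgs_range] with ω h1 h2
    rw [h1, ← ENNReal.ofReal_inv_of_pos h2.1]
  have hEfin : EinvGamStar P gam ≠ ⊤ := ne_top_of_lt hR0_gt
  have hE_ge1 : (1 : ℝ≥0∞) ≤ EinvGamStar P gam := by
    rw [hEinv]
    calc (1:ℝ≥0∞) = ∫⁻ _, 1 ∂P := by simp
    _ ≤ _ := lintegral_mono_ae (by
        filter_upwards [hgs_range] with ω h
        rw [← ENNReal.ofReal_one]
        exact ENNReal.ofReal_le_ofReal ((one_le_inv₀ h.1).2 h.2))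
  have hR_gt1 : (1:ℝ) < R := by
    have h1 : (1:ℝ≥0∞) < ENNReal.ofReal R := lt_of_le_of_lt hE_ge1 hR0_gt
    rwa [← ENNReal.ofReal_one, ENNReal.ofReal_lt_ofReal_iff_of_nonneg (by norm_num)] at h1
  have hRpos : 0 < R := lt_trans one_pos hR_gt1
  have hER : E < R := (ENNReal.lt_ofReal_iff_toReal_lt hEfin).1 hR0_gt
  have hZnonneg : 0 ≤ Z := integral_nonneg_of_ae hzeta0
  have hZpos : 0 < Z := by
    rcases hZnonneg.lt_or_eq with h | h
    · exact h
    · exfalso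
      have hzeta_zero : ∀ᵐ ω ∂P, zeta ω = 0 :=
        (integral_eq_zero_iff_of_nonneg_ae hzeta0 hzeta_int).1 h.symm
      have hlam_zero : ∀ᵐ ω ∂P, ∀ t : ℝ, 0 < t → lam ω t = 0 := by
        filter_upwards [hzeta_zero, hgam_eq, hgs_range, hsupp, hbnd] with ω h0 hg hgs hs hb
        intro t ht
        by_contra hne
        have hlampos : 0 < lam ω t := lt_of_le_of_ne (hb t ht.le).2.1.1 (Ne.symm hne)
        have hgam0 : 0 < gam ω 0 := by
          rw [hg 0 le_rfl, if_pos (le_of_eq h0), mul_one]; exact hgs.1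
        have := hs t 0 ht.le le_rfl hlampos hgam0
        linarith
      have hRzero : R = 0 := by
        rw [hR]
        unfold Rnought
        rw [setIntegral_congr_fun measurableSet_Ioi (g := fun _ => (0:ℝ)) ?_, integral_zero]
        intro t ht
        unfold lamBar
        refine integral_eq_zero_of_ae ?_
        filter_upwards [hlam_zero] with ω hω
        exact hω t ht
      linarith
  have hH : ∀ x : ℝ, 0 < x → Hfun P gam x = x * Z + E := by
    intro x hx
    set K : ℝ → Ω → ℝ≥0∞ :=
      fun s ω => ENNReal.ofReal (Real.exp (-(gs ω * max (s - x * zeta ω) 0))) with hK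
    have hKmeas : Measurable (Function.uncurry K) := by
      apply Measurable.ennreal_ofReal
      apply Real.measurable_exp.comp
      apply Measurable.neg
      exact (hgs_meas.comp measurable_snd).mul
        ((measurable_fst.sub ((hzeta_meas.comp measurable_snd).const_mul x)).max
          measurable_const)
    have hKle : ∀ s, ∫⁻ ω, K s ω ∂P ≤ 1 := by
      intro s
      calc ∫⁻ ω, K s ω ∂P ≤ ∫⁻ _, 1 ∂P := lintegral_mono_ae (by
            filter_upwards [hgs_range, hzeta0] with ω hg hz
            refine ENNReal.ofReal_le_one.2 (Real.exp_le_one_iff.2 ?_)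
            simp only [neg_nonpos]
            exact mul_nonneg hg.1.le (le_max_right _ _))
        _ = 1 := by simp
    have hinner : ∀ᵐ ω ∂P, ∀ s : ℝ, 0 ≤ s →
        (∫ r in (0:ℝ)..s, gam ω (r / x)) = gs ω * max (s - x * zeta ω) 0 := by
      filter_upwards [hgs_range, hzeta0, hgam_eq] with ω hg hz hgam
      intro s hs
      have hc : 0 ≤ x * zeta ω := mul_nonneg hx.le hz
      rw [intervalIntegral.integral_congr
        (g := fun r => if x * zeta ω ≤ r then gs ω else 0) ?_]
      · exact aux_ite_integral _ _ _ hc hs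
      · intro r hr
        rw [Set.uIcc_of_le hs] at hr
        show gam ω (r / x) = if x * zeta ω ≤ r then gs ω else 0
        rw [hgam _ (div_nonneg hr.1 hx.le)]
        by_cases h : zeta ω ≤ r / x
        · rw [if_pos h, mul_one, if_pos (by rw [mul_comm]; exact (le_div_iff₀ hx).1 h)]
        · rw [if_neg h, mul_zero,
            if_neg (fun hle => h ((le_div_iff₀ hx).2 (by linarith [mul_comm (zeta ω) x])))]
    have step1 : Hfun P gam x = ∫ s in Set.Ioi (0:ℝ), (∫⁻ ω, K s ω ∂P).toReal := by
      unfold Hfun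
      refine setIntegral_congr_fun measurableSet_Ioi (fun s hs => ?_)
      have hs0 : (0:ℝ) ≤ s := le_of_lt hs
      rw [integral_congr_ae
        (g := fun ω => Real.exp (-(gs ω * max (s - x * zeta ω) 0))) ?_]
      · exact integral_eq_lintegral_of_nonneg_ae
          (Eventually.of_forall fun ω => (Real.exp_pos _).le)
          (Real.measurable_exp.comp ((hgs_meas.mul
            ((measurable_const.sub (hzeta_meas.const_mul x)).max
              measurable_const)).neg)).aestronglyMeasurable
      · filter_upwards [hinner] with ω hω; rw [hω s hs0]
    have hmeas_inner : Measurable fun s => ∫⁻ ω, K s ω ∂P :=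
      hKmeas.lintegral_prod_right
    have step2 : (∫ s in Set.Ioi (0:ℝ), (∫⁻ ω, K s ω ∂P).toReal)
        = (∫⁻ s in Set.Ioi (0:ℝ), ∫⁻ ω, K s ω ∂P).toReal := by
      rw [integral_eq_lintegral_of_nonneg_ae
        (Eventually.of_forall fun s => ENNReal.toReal_nonneg)
        hmeas_inner.ennreal_toReal.aestronglyMeasurable]
      congr 1
      refine lintegral_congr fun s => ?_
      rw [ENNReal.ofReal_toReal (lt_of_le_of_lt (hKle s) ENNReal.one_lt_top).ne]
    have step3 : (∫⁻ s in Set.Ioi (0:ℝ), ∫⁻ ω, K s ω ∂P)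
        = ∫⁻ ω, (∫⁻ s in Set.Ioi (0:ℝ), K s ω) ∂P :=
      lintegral_lintegral_swap hKmeas.aemeasurable
    have step4 : ∀ᵐ ω ∂P, (∫⁻ s in Set.Ioi (0:ℝ), K s ω)
        = ENNReal.ofReal (x * zeta ω + (gs ω)⁻¹) := by
      filter_upwards [hgs_range, hzeta0] with ω hg hz
      have hc : 0 ≤ x * zeta ω := mul_nonneg hx.le hz
      rw [← aux_exp_integral (gs ω) (x * zeta ω) hg.1 hc,
        ofReal_integral_eq_lintegral_ofReal (aux_exp_integrable _ _ hg.1 hc)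
          (Eventually.of_forall fun s => (Real.exp_pos _).le)]
    have step5 : (∫⁻ ω, ENNReal.ofReal (x * zeta ω + (gs ω)⁻¹) ∂P)
        = ENNReal.ofReal (x * Z) + EinvGamStar P gam := by
      have h1 : (∫⁻ ω, ENNReal.ofReal (x * zeta ω + (gs ω)⁻¹) ∂P)
          = ∫⁻ ω, (ENNReal.ofReal (x * zeta ω) + ENNReal.ofReal ((gs ω)⁻¹)) ∂P := by
        refine lintegral_congr_ae ?_
        filter_upwards [hgs_range, hzeta0] with ω hg hz
        rw [ENNReal.ofReal_add (mul_nonneg hx.le hz) (inv_nonneg.2 hg.1.le)]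
      rw [h1, lintegral_add_left ((hzeta_meas.const_mul x).ennreal_ofReal), ← hEinv]
      congr 1
      rw [← ofReal_integral_eq_lintegral_ofReal (hzeta_int.const_mul x)
        (by filter_upwards [hzeta0] with ω hz; exact mul_nonneg hx.le hz),
        integral_const_mul]
    rw [step1, step2, step3, lintegral_congr_ae step4, step5,
      ENNReal.toReal_add ENNReal.ofReal_ne_top hEfin,
      ENNReal.toReal_ofReal (mul_nonneg hx.le hZnonneg)]
  have hFpos : 0 < Fstar := by
    rw [hFstar]; exact div_pos (by linarith) hZpos
  refine ⟨hFpos, ?_, ?_, ?_⟩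
  · rw [hH Fstar hFpos, hFstar, div_mul_cancel₀ _ (ne_of_gt hZpos)]
    ring
  · intro y hy hfy
    rw [hH y hy] at hfy
    rw [hFstar, eq_div_iff (ne_of_gt hZpos)]
    linarith
  · rw [hFstar]
    field_simp

end
end

section
/- Any càdlàg solution (S̄, F̄) of the limit epidemic system satisfies, for all t ≥ 0, the conservation identity 𝔼[exp(−∫₀ᵗ γ₀(r) F̄(r) dr)] + ∫₀ᵗ 𝔼[exp(−∫ₛᵗ γ(r−s) F̄(r) dr)]·S̄(s) F̄(s) ds = 1. -/
open MeasureTheory Filter Set ProbabilityTheory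
open scoped ENNReal

noncomputable section

variable {Ω : Type*} [MeasurableSpace Ω]

lemma measurable_of_rightCont {f : ℝ → ℝ}
    (hf : ∀ t : ℝ, 0 ≤ t → ContinuousWithinAt f (Set.Ici t) t) :
    Measurable fun u : ℝ => f (max u 0) := by
  have hφ : ∀ n : ℕ, Measurable fun u : ℝ => f ((⌈max u 0 * (n + 1)⌉₊ : ℝ) / (n + 1)) := by
    intro n
    have h1 : Measurable fun u : ℝ => (⌈max u 0 * ((n : ℝ) + 1)⌉₊ : ℕ) :=
      Nat.measurable_ceil.comp ((measurable_id.max measurable_const).mul_const _)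
    exact (measurable_of_countable (fun m : ℕ => f ((m : ℝ) / ((n : ℝ) + 1)))).comp h1
  apply measurable_of_tendsto_metrizable hφ
  rw [tendsto_pi_nhds]
  intro u
  set x := max u 0 with hx
  have hx0 : 0 ≤ x := le_max_right _ _
  have key : Tendsto (fun n : ℕ => (⌈x * (n + 1)⌉₊ : ℝ) / (n + 1)) atTop (nhdsWithin x (Set.Ici x)) := by
    have hmem : ∀ n : ℕ, (⌈x * ((n : ℝ) + 1)⌉₊ : ℝ) / ((n : ℝ) + 1) ∈ Set.Ici x := by
      intro n
      have hpos : (0:ℝ) < (n : ℝ) + 1 := by positivity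
      have := Nat.le_ceil (x * ((n : ℝ) + 1))
      rw [Set.mem_Ici, le_div_iff₀ hpos]
      linarith
    have hub : ∀ n : ℕ, (⌈x * ((n : ℝ) + 1)⌉₊ : ℝ) / ((n : ℝ) + 1) ≤ x + 1 / ((n : ℝ) + 1) := by
      intro n
      have hpos : (0:ℝ) < (n : ℝ) + 1 := by positivity
      have h2 : (⌈x * ((n : ℝ) + 1)⌉₊ : ℝ) < x * ((n : ℝ) + 1) + 1 :=
        Nat.ceil_lt_add_one (by positivity)
      rw [div_le_iff₀ hpos]
      have : (x + 1 / ((n : ℝ) + 1)) * ((n : ℝ) + 1) = x * ((n:ℝ)+1) + 1 := by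
        field_simp
      rw [this]
      linarith
    have hlim : Tendsto (fun n : ℕ => (⌈x * ((n : ℝ) + 1)⌉₊ : ℝ) / ((n : ℝ) + 1)) atTop (nhds x) := by
      have h1 : Tendsto (fun n : ℕ => x + 1 / ((n : ℝ) + 1)) atTop (nhds (x + 0)) :=
        tendsto_const_nhds.add (tendsto_one_div_add_atTop_nhds_zero_nat)
      rw [add_zero] at h1
      exact tendsto_of_tendsto_of_tendsto_of_le_of_le tendsto_const_nhds h1 hmem hub
    exact tendsto_nhdsWithin_of_tendsto_nhds_of_eventually_within _ hlim
      (Filter.Eventually.of_forall hmem)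
  exact (hf x hx0).tendsto.comp key

lemma cadlag_bddOn {f : ℝ → ℝ}
    (hrc : ∀ t : ℝ, 0 ≤ t → ContinuousWithinAt f (Set.Ici t) t)
    (hll : ∀ t : ℝ, 0 < t → ∃ l : ℝ, Filter.Tendsto f (nhdsWithin t (Set.Iio t)) (nhds l))
    (t : ℝ) : ∃ C : ℝ, ∀ x ∈ Set.Icc (0:ℝ) t, |f x| ≤ C := by
  rcases le_or_gt t 0 with ht | ht
  · rcases lt_or_eq_of_le ht with ht' | rfl
    · exact ⟨0, fun x hx => absurd (hx.1.trans hx.2) (not_le.2 ht')⟩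
    · exact ⟨|f 0|, fun x hx => by rw [le_antisymm hx.2 hx.1]⟩
  -- t > 0
  have key : ∀ u ∈ Set.Icc (0:ℝ) t, ∃ V : Set ℝ, V ∈ nhds u ∧
      ∃ M : ℝ, ∀ x ∈ V ∩ Set.Icc (0:ℝ) t, |f x| ≤ M := by
    intro u hu
    -- right side
    have h1 := hrc u hu.1
    rw [ContinuousWithinAt, Metric.tendsto_nhdsWithin_nhds] at h1
    obtain ⟨δ, hδ, hδ'⟩ := h1 1 one_pos
    rcases eq_or_lt_of_le hu.1 with rfl | hu0
    · refine ⟨Set.Iio δ, Iio_mem_nhds hδ, |f 0| + 1, ?_⟩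
      rintro x ⟨hx1, hx2, _⟩
      have := hδ' (Set.mem_Ici.2 hx2) (by rw [Real.dist_eq, abs_of_nonneg (by linarith)]; linarith [Set.mem_Iio.1 hx1])
      rw [Real.dist_eq] at this
      have := abs_sub_abs_le_abs_sub (f x) (f 0)
      linarith [le_of_lt (hδ' (Set.mem_Ici.2 hx2) (by rw [Real.dist_eq, abs_of_nonneg (by linarith)]; linarith [Set.mem_Iio.1 hx1]))]
    · obtain ⟨l, hl⟩ := hll u hu0
      rw [Metric.tendsto_nhdsWithin_nhds] at hl
      obtain ⟨δ', hδ'pos, hδ''⟩ := hl 1 one_pos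
      refine ⟨Set.Ioo (u - δ') (u + δ), Ioo_mem_nhds (by linarith) (by linarith),
        max (|f u| + 1) (|l| + 1), ?_⟩
      rintro x ⟨⟨hx1, hx2⟩, _, _⟩
      rcases le_or_gt u x with hxu | hxu
      · have := hδ' (Set.mem_Ici.2 hxu) (by rw [Real.dist_eq, abs_of_nonneg (by linarith)]; linarith)
        rw [Real.dist_eq] at this
        have h := abs_sub_abs_le_abs_sub (f x) (f u)
        exact le_max_of_le_left (by linarith)
      · have := hδ'' (Set.mem_Iio.2 hxu) (by rw [Real.dist_eq, abs_of_nonpos (by linarith)]; linarith)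
        rw [Real.dist_eq] at this
        have h := abs_sub_abs_le_abs_sub (f x) l
        exact le_max_of_le_right (by linarith)
  choose V hV M hM using key
  obtain ⟨s, hs⟩ := isCompact_Icc.elim_nhds_subcover' V hV
  rcases s.eq_empty_or_nonempty with rfl | hne
  · refine ⟨0, fun x hx => absurd (hs hx) (by simp)⟩
  · refine ⟨s.sup' hne (fun u => M u u.2), fun x hx => ?_⟩
    obtain ⟨u, hu, hxu⟩ := Set.mem_iUnion₂.1 (hs hx)
    exact le_trans (hM u u.2 x ⟨hxu, hx⟩) (Finset.le_sup' (fun u : { x // x ∈ Set.Icc (0:ℝ) t } => M u u.2) hu)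

lemma intervalIntegrable_of_bdd {f : ℝ → ℝ} {a b M : ℝ} (hmeas : Measurable f)
    (hbd : ∀ r ∈ Set.uIoc a b, |f r| ≤ M) : IntervalIntegrable f volume a b := by
  rw [intervalIntegrable_iff]
  have : IsFiniteMeasure (volume.restrict (Set.uIoc a b)) := by
    constructor
    rw [Measure.restrict_apply_univ, Set.uIoc]
    exact lt_of_le_of_lt (le_of_eq (Real.volume_Ioc)) ENNReal.ofReal_lt_top
  refine Integrable.mono' (integrable_const M) hmeas.aestronglyMeasurable ?_
  exact (ae_restrict_iff' measurableSet_uIoc).2 (ae_of_all _ fun r hr => by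
    simpa [Real.norm_eq_abs] using hbd r hr)

lemma exp_integral_identity {f : ℝ → ℝ} {a b : ℝ} (hab : a ≤ b)
    (hmeas : Measurable f) {M : ℝ} (hbd : ∀ r ∈ Set.Icc a b, |f r| ≤ M)
    (hrc : ∀ u ∈ Set.Ico a b, ContinuousWithinAt f (Set.Ici u) u) :
    Real.exp (- ∫ r in a..b, f r)
      = 1 - ∫ u in a..b, f u * Real.exp (- ∫ r in a..u, f r) := by
  have hbd' : ∀ r ∈ Set.uIoc a b, |f r| ≤ M := by
    intro r hr
    rw [Set.uIoc_of_le hab] at hr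
    exact hbd r (Set.Ioc_subset_Icc_self hr)
  have hint : IntervalIntegrable f volume a b := intervalIntegrable_of_bdd hmeas hbd'
  set A : ℝ → ℝ := fun u => ∫ r in a..u, f r with hA
  have hAcont : ContinuousOn A (Set.Icc a b) := by
    have := intervalIntegral.continuousOn_primitive_interval
      (μ := volume) (a := a) (b := b) (f := f) ?_
    · rwa [Set.uIcc_of_le hab] at this
    · rw [Set.uIcc_of_le hab]
      exact (intervalIntegrable_iff_integrableOn_Icc_of_le hab).1 hint
  have hφcont : ContinuousOn (fun u => Real.exp (- A u)) (Set.Icc a b) :=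
    (Real.continuous_exp.comp continuous_neg).comp_continuousOn hAcont
  have hderiv : ∀ u ∈ Set.Ioo a b,
      HasDerivWithinAt (fun u => Real.exp (- A u)) (-(f u * Real.exp (- A u))) (Set.Ioi u) u := by
    intro u hu
    have hintu : IntervalIntegrable f volume a u :=
      hint.mono_set (by rw [Set.uIcc_of_le hab, Set.uIcc_of_le hu.1.le]; exact Set.Icc_subset_Icc le_rfl hu.2.le)
    have hAder : HasDerivWithinAt A (f u) (Set.Ici u) u := by
      exact intervalIntegral.integral_hasDerivWithinAt_right (s := Set.Ici u) (t := Set.Ioi u)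
        hintu hmeas.stronglyMeasurable.stronglyMeasurableAtFilter
        ((hrc u ⟨hu.1.le, hu.2⟩).mono Set.Ioi_subset_Ici_self)
    have h2 : HasDerivWithinAt (fun u => Real.exp (- A u)) (Real.exp (- A u) * (-(f u))) (Set.Ici u) u :=
      (hAder.neg).exp
    have : Real.exp (- A u) * (-(f u)) = -(f u * Real.exp (- A u)) := by ring
    rw [this] at h2
    exact h2.mono Set.Ioi_subset_Ici_self
  have hφ'int : IntervalIntegrable (fun u => -(f u * Real.exp (- A u))) volume a b := by
    apply IntervalIntegrable.neg
    apply hint.mul_continuousOn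
    rw [Set.uIcc_of_le hab]
    exact hφcont
  have := intervalIntegral.integral_eq_sub_of_hasDeriv_right_of_le hab hφcont hderiv hφ'int
  rw [intervalIntegral.integral_neg] at this
  have hA0 : A a = 0 := intervalIntegral.integral_same
  rw [hA0] at this
  simp only [neg_zero, Real.exp_zero] at this
  have : ∫ u in a..b, f u * Real.exp (- A u) = 1 - Real.exp (- A b) := by linarith
  rw [this]
  ring

lemma meas_integral_Ioc {β : Type*} [MeasurableSpace β]
    {g : β → ℝ → ℝ} {a b : β → ℝ}
    (hg : Measurable (Function.uncurry g)) (ha : Measurable a) (hb : Measurable b) :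
    Measurable (fun x => ∫ r in Set.Ioc (a x) (b x), g x r) := by
  have h1 : ∀ x, ∫ r in Set.Ioc (a x) (b x), g x r
      = ∫ r, (Set.Ioc (a x) (b x)).indicator (g x) r :=
    fun x => (integral_indicator measurableSet_Ioc).symm
  simp only [h1]
  have h2 : Measurable (Function.uncurry fun x r => (Set.Ioc (a x) (b x)).indicator (g x) r) := by
    have : (Function.uncurry fun x r => (Set.Ioc (a x) (b x)).indicator (g x) r)
        = fun q : β × ℝ => if a q.1 < q.2 ∧ q.2 ≤ b q.1 then g q.1 q.2 else 0 := by
      ext q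
      simp [Function.uncurry, Set.indicator_apply, Set.mem_Ioc]
    rw [this]
    refine Measurable.ite ?_ hg measurable_const
    exact MeasurableSet.inter
      (measurableSet_lt (ha.comp measurable_fst) measurable_snd)
      (measurableSet_le measurable_snd (hb.comp measurable_fst))
  exact (h2.stronglyMeasurable.integral_prod_right').measurable

lemma ae_prod_of_ae_fst {α β : Type*} [MeasurableSpace α] [MeasurableSpace β]
    (μ : Measure α) (ν : Measure β) [SFinite ν] {p : α → Prop}
    (h : ∀ᵐ x ∂μ, p x) : ∀ᵐ z ∂(μ.prod ν), p z.1 :=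
  MeasureTheory.Measure.quasiMeasurePreserving_fst.ae h

lemma ae_prod_snd_mem {α β : Type*} [MeasurableSpace α] [MeasurableSpace β]
    (μ : Measure α) (ν : Measure β) [SFinite ν] {s : Set β} (hs : MeasurableSet s) :
    ∀ᵐ z ∂(μ.prod (ν.restrict s)), z.2 ∈ s :=
  MeasureTheory.Measure.quasiMeasurePreserving_snd.ae (ae_restrict_mem hs)

lemma swap_bdd {α : Type*} [MeasurableSpace α] (μ : Measure α) [IsFiniteMeasure μ]
    {a b : ℝ} (k : α → ℝ → ℝ) (hk : Measurable (Function.uncurry k)) (C : ℝ)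
    (hbd : ∀ᵐ x ∂μ, ∀ u ∈ Set.Ioc a b, |k x u| ≤ C) :
    ∫ x, (∫ u in Set.Ioc a b, k x u) ∂μ = ∫ u in Set.Ioc a b, (∫ x, k x u ∂μ) := by
  have hfin : IsFiniteMeasure (volume.restrict (Set.Ioc a b)) := by
    constructor
    rw [Measure.restrict_apply_univ]
    exact lt_of_le_of_lt (le_of_eq (Real.volume_Ioc)) ENNReal.ofReal_lt_top
  have hint : Integrable (Function.uncurry k) (μ.prod (volume.restrict (Set.Ioc a b))) := by
    refine Integrable.mono' (integrable_const C) hk.aestronglyMeasurable ?_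
    filter_upwards [ae_prod_of_ae_fst μ _ hbd, ae_prod_snd_mem μ volume measurableSet_Ioc]
      with z h1 h2
    simpa [Real.norm_eq_abs, Function.uncurry] using h1 z.2 h2
  exact MeasureTheory.integral_integral_swap hint

lemma integrable_of_bdd_meas {α : Type*} [MeasurableSpace α] {μ : Measure α} [IsFiniteMeasure μ]
    {f : α → ℝ} (hf : AEStronglyMeasurable f μ) {C : ℝ} (hbd : ∀ᵐ x ∂μ, |f x| ≤ C) :
    Integrable f μ :=
  Integrable.mono' (integrable_const C) hf (by simpa [Real.norm_eq_abs] using hbd)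

lemma isFiniteMeasure_restrict_Ioc (a b : ℝ) :
    IsFiniteMeasure (volume.restrict (Set.Ioc a b)) := by
  constructor
  rw [Measure.restrict_apply_univ]
  exact lt_of_le_of_lt (le_of_eq (Real.volume_Ioc)) ENNReal.ofReal_lt_top

set_option maxHeartbeats 2000000 in
lemma conservation_key {Ω : Type*} [MeasurableSpace Ω] (P : Measure Ω) [IsProbabilityMeasure P]
    (g0 g : Ω → ℝ → ℝ) (F S : ℝ → ℝ) (t : ℝ) (ht : 0 ≤ t)
    (hg0 : Measurable (Function.uncurry g0)) (hg : Measurable (Function.uncurry g))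
    (hae : ∀ᵐ ω ∂P, (∀ u : ℝ, 0 ≤ u → ContinuousWithinAt (g0 ω) (Set.Ici u) u
        ∧ ContinuousWithinAt (g ω) (Set.Ici u) u)
      ∧ (∀ u : ℝ, 0 ≤ u → g0 ω u ∈ Set.Icc (0:ℝ) 1 ∧ g ω u ∈ Set.Icc (0:ℝ) 1))
    (hF : Measurable F) (hS : Measurable S)
    (hFrc : ∀ u : ℝ, 0 ≤ u → u < t → ContinuousWithinAt F (Set.Ici u) u)
    (hFnn : ∀ u, 0 ≤ F u)
    {CF CS : ℝ} (hCF : ∀ u, |F u| ≤ CF) (hCS : ∀ u, |S u| ≤ CS)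
    (hSeq : ∀ u : ℝ, 0 ≤ u → u ≤ t →
      S u = (∫ ω, g0 ω u * Real.exp (- ∫ r in (0:ℝ)..u, g0 ω r * F r) ∂P)
        + ∫ s in (0:ℝ)..u,
            (∫ ω, g ω (u - s) * Real.exp (- ∫ r in s..u, g ω (r - s) * F r) ∂P) * (S s * F s)) :
    (∫ ω, Real.exp (- ∫ r in (0:ℝ)..t, g0 ω r * F r) ∂P)
      + (∫ s in (0:ℝ)..t,
          (∫ ω, Real.exp (- ∫ r in s..t, g ω (r - s) * F r) ∂P) * (S s * F s)) = 1 := by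
  haveI := isFiniteMeasure_restrict_Ioc 0 t
  have hCF0 : 0 ≤ CF := le_trans (abs_nonneg _) (hCF 0)
  have hCS0 : 0 ≤ CS := le_trans (abs_nonneg _) (hCS 0)
  set J0 : Ω → ℝ → ℝ := fun ω u => ∫ r in Set.Ioc (0:ℝ) u, g0 ω r * F r with hJ0def
  set Jg : Ω → ℝ → ℝ → ℝ := fun ω s u => ∫ r in Set.Ioc s u, g ω (r - s) * F r with hJgdef
  set B : ℝ → ℝ := fun u => ∫ ω, g0 ω u * Real.exp (-(J0 ω u)) ∂P with hBdef
  set E : ℝ → ℝ → ℝ := fun s u => ∫ ω, g ω (u - s) * Real.exp (-(Jg ω s u)) ∂P with hEdef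
  clear_value J0 Jg B E
  -- measurability
  have hJ0meas : Measurable (fun p : Ω × ℝ => J0 p.1 p.2) := by
    simp only [hJ0def]
    apply meas_integral_Ioc (g := fun (p : Ω × ℝ) r => g0 p.1 r * F r)
      (a := fun _ => (0:ℝ)) (b := fun p => p.2) ?_ measurable_const measurable_snd
    exact (hg0.comp ((measurable_fst.comp measurable_fst).prodMk measurable_snd)).mul
      (hF.comp measurable_snd)
  have hK0meas : Measurable (fun p : Ω × ℝ => g0 p.1 p.2 * F p.2 * Real.exp (-(J0 p.1 p.2))) := by
    exact ((hg0.mul (hF.comp measurable_snd)).mul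
      ((Real.measurable_exp.comp hJ0meas.neg)))
  have hBmeas : Measurable B := by
    rw [hBdef]
    have : Measurable (fun p : Ω × ℝ => g0 p.1 p.2 * Real.exp (-(J0 p.1 p.2))) :=
      hg0.mul (Real.measurable_exp.comp hJ0meas.neg)
    exact this.stronglyMeasurable.integral_prod_left'.measurable
  have hJgmeas : Measurable (fun q : Ω × (ℝ × ℝ) => Jg q.1 q.2.1 q.2.2) := by
    simp only [hJgdef]
    apply meas_integral_Ioc (g := fun (q : Ω × (ℝ × ℝ)) r => g q.1 (r - q.2.1) * F r)
      (a := fun q => q.2.1) (b := fun q => q.2.2)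
      ?_ (measurable_fst.comp measurable_snd) (measurable_snd.comp measurable_snd)
    exact (hg.comp ((measurable_fst.comp measurable_fst).prodMk
      (measurable_snd.sub ((measurable_fst.comp measurable_snd).comp measurable_fst)))).mul
      (hF.comp measurable_snd)
  have hKgmeas : Measurable (fun q : Ω × (ℝ × ℝ) =>
      g q.1 (q.2.2 - q.2.1) * Real.exp (-(Jg q.1 q.2.1 q.2.2))) := by
    exact (hg.comp (measurable_fst.prodMk
        ((measurable_snd.comp measurable_snd).sub (measurable_fst.comp measurable_snd)))).mul
      (Real.measurable_exp.comp hJgmeas.neg)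
  have hEmeas : Measurable (fun p : ℝ × ℝ => E p.1 p.2) := by
    simp only [hEdef]
    exact hKgmeas.stronglyMeasurable.integral_prod_left'.measurable
  -- nonnegativity of the exponents
  have hJ0nn : ∀ ω, (∀ u : ℝ, 0 ≤ u → g0 ω u ∈ Set.Icc (0:ℝ) 1) → ∀ u : ℝ, 0 ≤ J0 ω u := by
    intro ω hω u
    rw [hJ0def]
    apply setIntegral_nonneg measurableSet_Ioc
    intro r hr
    exact mul_nonneg ((hω r hr.1.le).1) (hFnn r)
  have hJgnn : ∀ ω, (∀ u : ℝ, 0 ≤ u → g ω u ∈ Set.Icc (0:ℝ) 1) →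
      ∀ s u : ℝ, 0 ≤ Jg ω s u := by
    intro ω hω s u
    rw [hJgdef]
    apply setIntegral_nonneg measurableSet_Ioc
    intro r hr
    exact mul_nonneg ((hω (r - s) (by linarith [hr.1])).1) (hFnn r)
  -- bounds on B and E
  have hBbd : ∀ u : ℝ, 0 ≤ u → |B u| ≤ 1 := by
    intro u hu
    rw [hBdef, ← Real.norm_eq_abs]
    have := MeasureTheory.norm_integral_le_of_norm_le_const (μ := P) (C := 1)
      (f := fun ω => g0 ω u * Real.exp (-(J0 ω u))) ?_
    · simpa [measure_univ] using this
    · filter_upwards [hae] with ω hω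
      rw [Real.norm_eq_abs, abs_mul]
      have h1 : |g0 ω u| ≤ 1 := abs_le.2 ⟨by linarith [(hω.2 u hu).1.1], (hω.2 u hu).1.2⟩
      have h2 : |Real.exp (-(J0 ω u))| ≤ 1 := by
        rw [abs_of_pos (Real.exp_pos _)]
        exact Real.exp_le_one_iff.2 (by simpa using hJ0nn ω (fun v hv => (hω.2 v hv).1) u)
      calc |g0 ω u| * |Real.exp (-(J0 ω u))| ≤ 1 * 1 :=
            mul_le_mul h1 h2 (abs_nonneg _) zero_le_one
        _ = 1 := by ring
  have hEbd : ∀ s u : ℝ, 0 ≤ s → s ≤ u → |E s u| ≤ 1 := by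
    intro s u hs hsu
    rw [hEdef, ← Real.norm_eq_abs]
    have := MeasureTheory.norm_integral_le_of_norm_le_const (μ := P) (C := 1)
      (f := fun ω => g ω (u - s) * Real.exp (-(Jg ω s u))) ?_
    · simpa [measure_univ] using this
    · filter_upwards [hae] with ω hω
      rw [Real.norm_eq_abs, abs_mul]
      have h1 : |g ω (u - s)| ≤ 1 := abs_le.2
        ⟨by linarith [(hω.2 (u - s) (by linarith)).2.1], (hω.2 (u - s) (by linarith)).2.2⟩
      have h2 : |Real.exp (-(Jg ω s u))| ≤ 1 := by
        rw [abs_of_pos (Real.exp_pos _)]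
        exact Real.exp_le_one_iff.2
          (by simpa using hJgnn ω (fun v hv => (hω.2 v hv).2) s u)
      calc |g ω (u-s)| * |Real.exp (-(Jg ω s u))| ≤ 1 * 1 :=
            mul_le_mul h1 h2 (abs_nonneg _) zero_le_one
        _ = 1 := by ring
  -- per-omega identity for the g0 term
  have hident0 : ∀ᵐ ω ∂P, Real.exp (-(J0 ω t))
      = 1 - ∫ u in Set.Ioc (0:ℝ) t, g0 ω u * F u * Real.exp (-(J0 ω u)) := by
    filter_upwards [hae] with ω hω
    have hmeasf : Measurable (fun r => g0 ω r * F r) := hg0.of_uncurry_left.mul hF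
    have hbdf : ∀ r ∈ Set.Icc (0:ℝ) t, |g0 ω r * F r| ≤ CF := by
      intro r hr
      rw [abs_mul]
      calc |g0 ω r| * |F r| ≤ 1 * CF := mul_le_mul
            (abs_le.2 ⟨by linarith [(hω.2 r hr.1).1.1], (hω.2 r hr.1).1.2⟩)
            (hCF r) (abs_nonneg _) zero_le_one
        _ = CF := one_mul _
    have hrcf : ∀ u ∈ Set.Ico (0:ℝ) t, ContinuousWithinAt (fun r => g0 ω r * F r)
        (Set.Ici u) u := fun u hu => ((hω.1 u hu.1).1).mul (hFrc u hu.1 hu.2)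
    have h1 := exp_integral_identity ht hmeasf hbdf hrcf
    have hconv : ∀ u : ℝ, 0 ≤ u → ∫ r in (0:ℝ)..u, g0 ω r * F r = J0 ω u := by
      intro u hu
      rw [hJ0def]
      exact intervalIntegral.integral_of_le hu
    calc Real.exp (-(J0 ω t)) = Real.exp (- ∫ r in (0:ℝ)..t, g0 ω r * F r) := by
          rw [hconv t ht]
      _ = 1 - ∫ u in (0:ℝ)..t, (g0 ω u * F u) * Real.exp (- ∫ r in (0:ℝ)..u, g0 ω r * F r) := h1
      _ = 1 - ∫ u in Set.Ioc (0:ℝ) t, g0 ω u * F u * Real.exp (-(J0 ω u)) := by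
          rw [intervalIntegral.integral_of_le ht]
          congr 1
          apply setIntegral_congr_fun measurableSet_Ioc
          intro u hu
          beta_reduce
          rw [hconv u hu.1.le]
  -- integrability of the inner integral as a function of omega
  have hinner0_meas : Measurable (fun ω => ∫ u in Set.Ioc (0:ℝ) t,
      g0 ω u * F u * Real.exp (-(J0 ω u))) := by
    apply meas_integral_Ioc (g := fun (ω : Ω) u => g0 ω u * F u * Real.exp (-(J0 ω u)))
      (a := fun _ => (0:ℝ)) (b := fun _ => t) hK0meas measurable_const measurable_const
  have hK0bd : ∀ᵐ ω ∂P, ∀ u ∈ Set.Ioc (0:ℝ) t,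
      |g0 ω u * F u * Real.exp (-(J0 ω u))| ≤ CF := by
    filter_upwards [hae] with ω hω u hu
    rw [abs_mul, abs_mul]
    have h1 : |g0 ω u| ≤ 1 := abs_le.2
      ⟨by linarith [(hω.2 u hu.1.le).1.1], (hω.2 u hu.1.le).1.2⟩
    have h2 : |Real.exp (-(J0 ω u))| ≤ 1 := by
      rw [abs_of_pos (Real.exp_pos _)]
      exact Real.exp_le_one_iff.2 (by simpa using hJ0nn ω (fun v hv => (hω.2 v hv).1) u)
    calc |g0 ω u| * |F u| * |Real.exp (-(J0 ω u))| ≤ 1 * CF * 1 := by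
          apply mul_le_mul _ h2 (abs_nonneg _) (by positivity)
          exact mul_le_mul h1 (hCF u) (abs_nonneg _) zero_le_one
      _ = CF := by ring
  have hinner0_int : Integrable (fun ω => ∫ u in Set.Ioc (0:ℝ) t,
      g0 ω u * F u * Real.exp (-(J0 ω u))) P := by
    apply integrable_of_bdd_meas hinner0_meas.aestronglyMeasurable (C := CF * t)
    filter_upwards [hK0bd] with ω hω
    rw [← Real.norm_eq_abs]
    have := MeasureTheory.norm_integral_le_of_norm_le_const
      (μ := volume.restrict (Set.Ioc (0:ℝ) t)) (C := CF)
      (f := fun u => g0 ω u * F u * Real.exp (-(J0 ω u)))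
      ((ae_restrict_iff' measurableSet_Ioc).2 (ae_of_all _ fun u hu => by
        rw [Real.norm_eq_abs]; exact hω u hu))
    simpa [Measure.restrict_apply_univ, Real.volume_Ioc, ENNReal.toReal_ofReal ht, max_eq_left ht] using this
  -- T1
  have EqT1 : (∫ ω, Real.exp (-(J0 ω t)) ∂P)
      = 1 - ∫ u in Set.Ioc (0:ℝ) t, F u * B u := by
    rw [integral_congr_ae hident0, integral_sub (integrable_const 1) hinner0_int]
    simp only [integral_const, measure_univ, ENNReal.toReal_one, probReal_univ, smul_eq_mul, one_mul]
    congr 1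
    rw [swap_bdd P (k := fun ω u => g0 ω u * F u * Real.exp (-(J0 ω u))) hK0meas CF hK0bd]
    apply setIntegral_congr_fun measurableSet_Ioc
    intro u _
    beta_reduce
    have : ∀ ω, g0 ω u * F u * Real.exp (-(J0 ω u))
        = F u * (g0 ω u * Real.exp (-(J0 ω u))) := fun ω => by ring
    rw [integral_congr_ae (ae_of_all _ this), integral_const_mul, hBdef]
  -- per-s identity for the g term
  have hKgbd : ∀ s : ℝ, 0 ≤ s → ∀ᵐ ω ∂P, ∀ u ∈ Set.Ioc s t,
      |g ω (u - s) * F u * Real.exp (-(Jg ω s u))| ≤ CF := by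
    intro s hs
    filter_upwards [hae] with ω hω u hu
    rw [abs_mul, abs_mul]
    have h1 : |g ω (u - s)| ≤ 1 := abs_le.2
      ⟨by linarith [(hω.2 (u - s) (by linarith [hu.1])).2.1],
        (hω.2 (u - s) (by linarith [hu.1])).2.2⟩
    have h2 : |Real.exp (-(Jg ω s u))| ≤ 1 := by
      rw [abs_of_pos (Real.exp_pos _)]
      exact Real.exp_le_one_iff.2 (by simpa using hJgnn ω (fun v hv => (hω.2 v hv).2) s u)
    calc |g ω (u - s)| * |F u| * |Real.exp (-(Jg ω s u))| ≤ 1 * CF * 1 := by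
          apply mul_le_mul _ h2 (abs_nonneg _) (by positivity)
          exact mul_le_mul h1 (hCF u) (abs_nonneg _) zero_le_one
      _ = CF := by ring
  have hKgmeas' : ∀ s : ℝ, Measurable (fun p : Ω × ℝ =>
      g p.1 (p.2 - s) * F p.2 * Real.exp (-(Jg p.1 s p.2))) := by
    intro s
    have hJs : Measurable (fun p : Ω × ℝ => Jg p.1 s p.2) :=
      hJgmeas.comp (measurable_fst.prodMk (measurable_const.prodMk measurable_snd))
    exact ((hg.comp (measurable_fst.prodMk (measurable_snd.sub measurable_const))).mul
      (hF.comp measurable_snd)).mul (Real.measurable_exp.comp hJs.neg)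
  have hidentg : ∀ s : ℝ, 0 ≤ s → s ≤ t →
      (∫ ω, Real.exp (-(Jg ω s t)) ∂P) = 1 - ∫ u in Set.Ioc s t, F u * E s u := by
    intro s hs hst
    haveI := isFiniteMeasure_restrict_Ioc s t
    have hid : ∀ᵐ ω ∂P, Real.exp (-(Jg ω s t))
        = 1 - ∫ u in Set.Ioc s t, g ω (u - s) * F u * Real.exp (-(Jg ω s u)) := by
      filter_upwards [hae] with ω hω
      have hmeasf : Measurable (fun r => g ω (r - s) * F r) :=
        (hg.of_uncurry_left.comp (measurable_id.sub_const s)).mul hF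
      have hbdf : ∀ r ∈ Set.Icc s t, |g ω (r - s) * F r| ≤ CF := by
        intro r hr
        rw [abs_mul]
        calc |g ω (r - s)| * |F r| ≤ 1 * CF := mul_le_mul
              (abs_le.2 ⟨by linarith [(hω.2 (r - s) (by linarith [hr.1])).2.1],
                (hω.2 (r - s) (by linarith [hr.1])).2.2⟩)
              (hCF r) (abs_nonneg _) zero_le_one
          _ = CF := one_mul _
      have hrcf : ∀ u ∈ Set.Ico s t, ContinuousWithinAt (fun r => g ω (r - s) * F r)
          (Set.Ici u) u := by
        intro u hu
        have hg1 : ContinuousWithinAt (fun r => g ω (r - s)) (Set.Ici u) u := by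
          have houter : ContinuousWithinAt (g ω) (Set.Ici (u - s)) (u - s) :=
            (hω.1 (u - s) (by linarith [hu.1])).2
          have hinner : ContinuousWithinAt (fun r : ℝ => r - s) (Set.Ici u) u :=
            (continuous_id.sub continuous_const).continuousWithinAt
          exact ContinuousWithinAt.comp (x := u) (f := fun r : ℝ => r - s)
            (g := g ω) (s := Set.Ici u) (t := Set.Ici (u - s)) houter hinner
            (fun r hr => by simpa using sub_le_sub_right (Set.mem_Ici.1 hr) s)
        exact hg1.mul (hFrc u (by linarith [hu.1]) hu.2)
      have h1 := exp_integral_identity hst hmeasf hbdf hrcf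
      have hconv : ∀ u : ℝ, s ≤ u → ∫ r in s..u, g ω (r - s) * F r = Jg ω s u := by
        intro u hu
        rw [hJgdef]
        exact intervalIntegral.integral_of_le hu
      calc Real.exp (-(Jg ω s t)) = Real.exp (- ∫ r in s..t, g ω (r - s) * F r) := by
            rw [hconv t hst]
        _ = 1 - ∫ u in s..t, (g ω (u - s) * F u) * Real.exp (- ∫ r in s..u, g ω (r - s) * F r) :=
            h1
        _ = 1 - ∫ u in Set.Ioc s t, g ω (u - s) * F u * Real.exp (-(Jg ω s u)) := by
            rw [intervalIntegral.integral_of_le hst]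
            congr 1
            apply setIntegral_congr_fun measurableSet_Ioc
            intro u hu
            beta_reduce
            rw [hconv u hu.1.le]
    have hinner_meas : Measurable (fun ω => ∫ u in Set.Ioc s t,
        g ω (u - s) * F u * Real.exp (-(Jg ω s u))) := by
      apply meas_integral_Ioc (g := fun (ω : Ω) u => g ω (u - s) * F u * Real.exp (-(Jg ω s u)))
        (a := fun _ => s) (b := fun _ => t) (hKgmeas' s) measurable_const measurable_const
    have hinner_int : Integrable (fun ω => ∫ u in Set.Ioc s t,
        g ω (u - s) * F u * Real.exp (-(Jg ω s u))) P := by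
      apply integrable_of_bdd_meas hinner_meas.aestronglyMeasurable (C := CF * (t - s))
      filter_upwards [hKgbd s hs] with ω hω
      rw [← Real.norm_eq_abs]
      have := MeasureTheory.norm_integral_le_of_norm_le_const
        (μ := volume.restrict (Set.Ioc s t)) (C := CF)
        (f := fun u => g ω (u - s) * F u * Real.exp (-(Jg ω s u)))
        ((ae_restrict_iff' measurableSet_Ioc).2 (ae_of_all _ fun u hu => by
          rw [Real.norm_eq_abs]; exact hω u hu))
      simpa [Measure.restrict_apply_univ, Real.volume_Ioc,
        ENNReal.toReal_ofReal (by linarith : (0:ℝ) ≤ t - s),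
        max_eq_left (by linarith : (0:ℝ) ≤ t - s)] using this
    rw [integral_congr_ae hid, integral_sub (integrable_const 1) hinner_int]
    simp only [integral_const, measure_univ, ENNReal.toReal_one, probReal_univ, smul_eq_mul, one_mul]
    congr 1
    rw [swap_bdd P (k := fun ω u => g ω (u - s) * F u * Real.exp (-(Jg ω s u)))
      (hKgmeas' s) CF (hKgbd s hs)]
    apply setIntegral_congr_fun measurableSet_Ioc
    intro u _
    beta_reduce
    have : ∀ ω, g ω (u - s) * F u * Real.exp (-(Jg ω s u))
        = F u * (g ω (u - s) * Real.exp (-(Jg ω s u))) := fun ω => by ring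
    rw [integral_congr_ae (ae_of_all _ this), integral_const_mul, hEdef]
  -- the S equation in Ioc form
  have hSeq' : ∀ u : ℝ, 0 ≤ u → u ≤ t →
      ∫ s in Set.Ioc (0:ℝ) u, E s u * (S s * F s) = S u - B u := by
    intro u hu hut
    have h0 : (∫ ω, g0 ω u * Real.exp (- ∫ r in (0:ℝ)..u, g0 ω r * F r) ∂P) = B u := by
      rw [hBdef]
      apply integral_congr_ae (ae_of_all _ _)
      intro ω
      beta_reduce
      rw [show (∫ r in (0:ℝ)..u, g0 ω r * F r) = J0 ω u from by
        rw [hJ0def]; exact intervalIntegral.integral_of_le hu]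
    have h2 : (∫ s in (0:ℝ)..u,
          (∫ ω, g ω (u - s) * Real.exp (- ∫ r in s..u, g ω (r - s) * F r) ∂P) * (S s * F s))
        = ∫ s in Set.Ioc (0:ℝ) u, E s u * (S s * F s) := by
      rw [intervalIntegral.integral_of_le hu]
      apply setIntegral_congr_fun measurableSet_Ioc
      intro s hs
      beta_reduce
      congr 1
      rw [hEdef]
      apply integral_congr_ae (ae_of_all _ _)
      intro ω
      beta_reduce
      rw [show (∫ r in s..u, g ω (r - s) * F r) = Jg ω s u from by
        rw [hJgdef]; exact intervalIntegral.integral_of_le hs.2]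
    have h3 := hSeq u hu hut
    rw [h0, h2] at h3
    linarith
  -- convert the goal to Ioc form
  have hT1 : (∫ ω, Real.exp (- ∫ r in (0:ℝ)..t, g0 ω r * F r) ∂P)
      = ∫ ω, Real.exp (-(J0 ω t)) ∂P := by
    apply integral_congr_ae (ae_of_all _ _)
    intro ω
    beta_reduce
    rw [show (∫ r in (0:ℝ)..t, g0 ω r * F r) = J0 ω t from by
      rw [hJ0def]; exact intervalIntegral.integral_of_le ht]
  have hT2 : (∫ s in (0:ℝ)..t,
        (∫ ω, Real.exp (- ∫ r in s..t, g ω (r - s) * F r) ∂P) * (S s * F s))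
      = ∫ s in Set.Ioc (0:ℝ) t, (∫ ω, Real.exp (-(Jg ω s t)) ∂P) * (S s * F s) := by
    rw [intervalIntegral.integral_of_le ht]
    apply setIntegral_congr_fun measurableSet_Ioc
    intro s hs
    beta_reduce
    congr 1
    apply integral_congr_ae (ae_of_all _ _)
    intro ω
    beta_reduce
    rw [show (∫ r in s..t, g ω (r - s) * F r) = Jg ω s t from by
      rw [hJgdef]; exact intervalIntegral.integral_of_le hs.2]
  rw [hT1, hT2, EqT1]
  have hstep : (∫ s in Set.Ioc (0:ℝ) t, (∫ ω, Real.exp (-(Jg ω s t)) ∂P) * (S s * F s))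
      = ∫ s in Set.Ioc (0:ℝ) t,
          (S s * F s - (∫ u in Set.Ioc s t, F u * E s u) * (S s * F s)) := by
    apply setIntegral_congr_fun measurableSet_Ioc
    intro s hs
    beta_reduce
    rw [hidentg s hs.1.le hs.2]
    ring
  rw [hstep]
  -- integrability on Ioc 0 t
  have hSFint : Integrable (fun s => S s * F s) (volume.restrict (Set.Ioc (0:ℝ) t)) := by
    apply integrable_of_bdd_meas (hS.mul hF).aestronglyMeasurable (C := CS * CF)
    apply ae_of_all
    intro s
    rw [Pi.mul_apply, abs_mul]
    exact mul_le_mul (hCS s) (hCF s) (abs_nonneg _) hCS0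
  have hInnermeas : Measurable (fun s : ℝ => ∫ u in Set.Ioc s t, F u * E s u) := by
    apply meas_integral_Ioc (g := fun (s : ℝ) u => F u * E s u)
      (a := fun s => s) (b := fun _ => t) ?_ measurable_id measurable_const
    exact (hF.comp measurable_snd).mul hEmeas
  have hInnerbd : ∀ s ∈ Set.Ioc (0:ℝ) t, |∫ u in Set.Ioc s t, F u * E s u| ≤ CF * t := by
    intro s hs
    haveI := isFiniteMeasure_restrict_Ioc s t
    rw [← Real.norm_eq_abs]
    have h := MeasureTheory.norm_integral_le_of_norm_le_const
      (μ := volume.restrict (Set.Ioc s t)) (C := CF)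
      (f := fun u => F u * E s u)
      ((ae_restrict_iff' measurableSet_Ioc).2 (ae_of_all _ fun u hu => by
        rw [Real.norm_eq_abs, abs_mul]
        calc |F u| * |E s u| ≤ CF * 1 :=
              mul_le_mul (hCF u) (hEbd s u hs.1.le hu.1.le) (abs_nonneg _) hCF0
          _ = CF := mul_one _))
    rw [Measure.real, Measure.restrict_apply_univ, Real.volume_Ioc] at h
    rcases le_or_gt s t with hst | hst
    · rw [ENNReal.toReal_ofReal (by linarith)] at h
      calc ‖∫ u in Set.Ioc s t, F u * E s u‖ ≤ CF * (t - s) := h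
        _ ≤ CF * t := by nlinarith [hs.1]
    · rw [Set.Ioc_eq_empty (not_lt.2 hst.le), Measure.restrict_empty, integral_zero_measure]
      simp
      positivity
  have hProdInt : Integrable
      (fun s => (∫ u in Set.Ioc s t, F u * E s u) * (S s * F s))
      (volume.restrict (Set.Ioc (0:ℝ) t)) := by
    apply integrable_of_bdd_meas
      ((hInnermeas.mul (hS.mul hF)).aestronglyMeasurable) (C := CF * t * (CS * CF))
    apply (ae_restrict_iff' measurableSet_Ioc).2 (ae_of_all _ fun s hs => ?_)
    rw [Pi.mul_apply, abs_mul]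
    apply mul_le_mul (hInnerbd s hs) _ (abs_nonneg _) (by positivity)
    rw [Pi.mul_apply, abs_mul]
    exact mul_le_mul (hCS s) (hCF s) (abs_nonneg _) hCS0
  rw [integral_sub hSFint hProdInt]
  -- triangle swap
  have hTri : (∫ s in Set.Ioc (0:ℝ) t, (∫ u in Set.Ioc s t, F u * E s u) * (S s * F s))
      = ∫ u in Set.Ioc (0:ℝ) t, F u * (S u - B u) := by
    set Kt : ℝ → ℝ → ℝ := fun s u => if s < u then F u * E s u * (S s * F s) else 0 with hKtdef
    have hKtmeas : Measurable (Function.uncurry Kt) := by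
      rw [hKtdef]
      have : (Function.uncurry fun s u => if s < u then F u * E s u * (S s * F s) else 0)
          = fun q : ℝ × ℝ => if q.1 < q.2 then F q.2 * E q.1 q.2 * (S q.1 * F q.1) else 0 := by
        ext q
        simp [Function.uncurry]
      rw [this]
      refine Measurable.ite (measurableSet_lt measurable_fst measurable_snd) ?_ measurable_const
      exact ((hF.comp measurable_snd).mul hEmeas).mul
        ((hS.comp measurable_fst).mul (hF.comp measurable_fst))
    have hstep1 : ∀ s ∈ Set.Ioc (0:ℝ) t,
        (∫ u in Set.Ioc s t, F u * E s u) * (S s * F s) = ∫ u in Set.Ioc (0:ℝ) t, Kt s u := by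
      intro s hs
      have e1 : ∀ u : ℝ, Kt s u
          = (Set.Ioi s).indicator (fun u => F u * E s u * (S s * F s)) u := by
        intro u
        rw [hKtdef]
        simp [Set.indicator_apply, Set.mem_Ioi]
      calc (∫ u in Set.Ioc s t, F u * E s u) * (S s * F s)
          = ∫ u in Set.Ioc s t, F u * E s u * (S s * F s) := (integral_mul_const _ _).symm
        _ = ∫ u in Set.Ioi s, (fun u => F u * E s u * (S s * F s)) u
              ∂(volume.restrict (Set.Ioc (0:ℝ) t)) := by
            rw [Measure.restrict_restrict measurableSet_Ioi]
            congr 1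
            have : Set.Ioi s ∩ Set.Ioc (0:ℝ) t = Set.Ioc s t := by
              ext u
              simp only [Set.mem_inter_iff, Set.mem_Ioi, Set.mem_Ioc]
              constructor
              · rintro ⟨h1, _, h3⟩; exact ⟨h1, h3⟩
              · rintro ⟨h1, h2⟩; exact ⟨h1, lt_trans hs.1 h1, h2⟩
            rw [this]
        _ = ∫ u in Set.Ioc (0:ℝ) t, Kt s u := by
            rw [← integral_indicator measurableSet_Ioi]
            apply integral_congr_ae (ae_of_all _ fun u => (e1 u).symm)
    rw [setIntegral_congr_fun measurableSet_Ioc hstep1]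
    rw [swap_bdd (volume.restrict (Set.Ioc (0:ℝ) t)) Kt hKtmeas (CF * (CS * CF)) ?_]
    · apply setIntegral_congr_fun measurableSet_Ioc
      intro u hu
      beta_reduce
      have e2 : ∀ s : ℝ, Kt s u
          = (Set.Iio u).indicator (fun s => F u * E s u * (S s * F s)) s := by
        intro s
        rw [hKtdef]
        simp [Set.indicator_apply, Set.mem_Iio]
      calc ∫ s in Set.Ioc (0:ℝ) t, Kt s u
          = ∫ s in Set.Ioc (0:ℝ) t,
              (Set.Iio u).indicator (fun s => F u * E s u * (S s * F s)) s :=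
            integral_congr_ae (ae_of_all _ fun s => e2 s)
        _ = ∫ s in Set.Iio u, (fun s => F u * E s u * (S s * F s)) s
              ∂(volume.restrict (Set.Ioc (0:ℝ) t)) := integral_indicator measurableSet_Iio
        _ = ∫ s in Set.Ioo (0:ℝ) u, F u * E s u * (S s * F s) := by
            rw [Measure.restrict_restrict measurableSet_Iio]
            congr 1
            have : Set.Iio u ∩ Set.Ioc (0:ℝ) t = Set.Ioo (0:ℝ) u := by
              ext s
              simp only [Set.mem_inter_iff, Set.mem_Iio, Set.mem_Ioc, Set.mem_Ioo]
              constructor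
              · rintro ⟨h1, h2, _⟩; exact ⟨h2, h1⟩
              · rintro ⟨h1, h2⟩; exact ⟨h2, h1, le_trans h2.le hu.2⟩
            rw [this]
        _ = ∫ s in Set.Ioc (0:ℝ) u, F u * E s u * (S s * F s) := by
            rw [Measure.restrict_congr_set Ioo_ae_eq_Ioc]
        _ = F u * (S u - B u) := by
            have : ∀ s, F u * E s u * (S s * F s) = F u * (E s u * (S s * F s)) :=
              fun s => by ring
            rw [integral_congr_ae (ae_of_all _ this), integral_const_mul,
              hSeq' u hu.1.le hu.2]
    · apply (ae_restrict_iff' measurableSet_Ioc).2 (ae_of_all _ fun s hs => ?_)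
      intro u hu
      rw [hKtdef]
      by_cases hsu : s < u
      · simp only [if_pos hsu]
        rw [abs_mul, abs_mul]
        apply mul_le_mul _ _ (abs_nonneg _) (by positivity)
        · calc |F u| * |E s u| ≤ CF * 1 :=
              mul_le_mul (hCF u) (hEbd s u hs.1.le hsu.le) (abs_nonneg _) hCF0
            _ = CF := mul_one _
        · rw [abs_mul]
          exact mul_le_mul (hCS s) (hCF s) (abs_nonneg _) hCS0
      · simp only [if_neg hsu, abs_zero]
        positivity
  rw [hTri]
  -- final bookkeeping
  have hFBint : Integrable (fun u => F u * B u) (volume.restrict (Set.Ioc (0:ℝ) t)) := by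
    apply integrable_of_bdd_meas (hF.mul hBmeas).aestronglyMeasurable (C := CF * 1)
    apply (ae_restrict_iff' measurableSet_Ioc).2 (ae_of_all _ fun u hu => ?_)
    rw [Pi.mul_apply, abs_mul]
    exact mul_le_mul (hCF u) (hBbd u hu.1.le) (abs_nonneg _) hCF0
  have hsplit : (∫ u in Set.Ioc (0:ℝ) t, F u * (S u - B u))
      = (∫ u in Set.Ioc (0:ℝ) t, S u * F u) - ∫ u in Set.Ioc (0:ℝ) t, F u * B u := by
    rw [← integral_sub hSFint hFBint]
    apply setIntegral_congr_fun measurableSet_Ioc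
    intro u _
    beta_reduce
    ring
  rw [hsplit]
  ring

/-- Any càdlàg solution of the limit epidemic system satisfies the
conservation identity
`𝔼[exp(−∫₀ᵗ γ₀(r) F̄(r) dr)] + ∫₀ᵗ 𝔼[exp(−∫ₛᵗ γ(r−s) F̄(r) dr)] S̄(s) F̄(s) ds = 1`. -/

theorem conservation_identity
    {Ω : Type*} [MeasurableSpace Ω] (P : Measure Ω) [IsProbabilityMeasure P]
    (lamStar : ℝ) (lam0 gam0 lam gam : Ω → ℝ → ℝ)
    (hctx : BaseContext P lamStar lam0 gam0 lam gam)
    (S F : ℝ → ℝ)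
    (hsol : IsLimitSolution P lam0 gam0 lam gam S F) :
    ∀ t : ℝ, 0 ≤ t →
      (∫ ω, Real.exp (- ∫ r in (0:ℝ)..t, gam0 ω r * F r) ∂P)
        + (∫ s in (0:ℝ)..t,
            (∫ ω, Real.exp (- ∫ r in s..t, gam ω (r - s) * F r) ∂P) * (S s * F s)) = 1 := by
  intro t ht
  obtain ⟨hcadS, hcadF, hpos, hsyS, hsyF⟩ := hsol
  obtain ⟨-, -, hmg0, -, hmg, hcad, hrange, -, -⟩ := hctx
  obtain ⟨CF, hCF⟩ := cadlag_bddOn hcadF.1 hcadF.2 t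
  obtain ⟨CS, hCS⟩ := cadlag_bddOn hcadS.1 hcadS.2 t
  set c : ℝ → ℝ := fun u => max (min u t) 0 with hcdef
  have hcmem : ∀ u, c u ∈ Set.Icc (0:ℝ) t := fun u =>
    ⟨le_max_right _ _, max_le (min_le_right _ _) ht⟩
  have hceq : ∀ u ∈ Set.Icc (0:ℝ) t, c u = u := by
    intro u hu
    rw [hcdef]
    beta_reduce
    rw [min_eq_left hu.2, max_eq_left hu.1]
  set Fc : ℝ → ℝ := fun u => F (c u) with hFcdef
  set Sc : ℝ → ℝ := fun u => S (c u) with hScdef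
  have hFeqOn : ∀ u ∈ Set.Icc (0:ℝ) t, Fc u = F u := by
    intro u hu
    rw [hFcdef]
    beta_reduce
    rw [hceq u hu]
  have hSeqOn : ∀ u ∈ Set.Icc (0:ℝ) t, Sc u = S u := by
    intro u hu
    rw [hScdef]
    beta_reduce
    rw [hceq u hu]
  have hFc_meas : Measurable Fc := by
    have h1 : Measurable (fun v : ℝ => F (max v 0)) := measurable_of_rightCont hcadF.1
    have h2 : Fc = (fun v : ℝ => F (max v 0)) ∘ (fun u : ℝ => min u t) := by
      funext u
      rw [hFcdef, hcdef]
      rfl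
    rw [h2]
    exact h1.comp (measurable_id.min measurable_const)
  have hSc_meas : Measurable Sc := by
    have h1 : Measurable (fun v : ℝ => S (max v 0)) := measurable_of_rightCont hcadS.1
    have h2 : Sc = (fun v : ℝ => S (max v 0)) ∘ (fun u : ℝ => min u t) := by
      funext u
      rw [hScdef, hcdef]
      rfl
    rw [h2]
    exact h1.comp (measurable_id.min measurable_const)
  have hFc_bd : ∀ u, |Fc u| ≤ CF := fun u => hCF (c u) (hcmem u)
  have hSc_bd : ∀ u, |Sc u| ≤ CS := fun u => hCS (c u) (hcmem u)
  have hFc_nn : ∀ u, 0 ≤ Fc u := fun u => (hpos (c u) (hcmem u).1).2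
  have hFc_rc : ∀ u : ℝ, 0 ≤ u → u < t → ContinuousWithinAt Fc (Set.Ici u) u := by
    intro u hu hut
    have hcu : c u = u := hceq u ⟨hu, hut.le⟩
    have hcont : ContinuousWithinAt c (Set.Ici u) u :=
      (Continuous.max (continuous_id.min continuous_const) continuous_const).continuousWithinAt
    have hmaps : Set.MapsTo c (Set.Ici u) (Set.Ici (c u)) := by
      intro v hv
      rw [Set.mem_Ici]
      exact max_le_max (min_le_min (Set.mem_Ici.1 hv) le_rfl) le_rfl
    have houter : ContinuousWithinAt F (Set.Ici (c u)) (c u) := hcadF.1 (c u) (hcmem u).1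
    exact ContinuousWithinAt.comp (x := u) (f := c) (g := F)
      (s := Set.Ici u) (t := Set.Ici (c u)) houter hcont hmaps
  have hae : ∀ᵐ ω ∂P, (∀ u : ℝ, 0 ≤ u → ContinuousWithinAt (gam0 ω) (Set.Ici u) u
        ∧ ContinuousWithinAt (gam ω) (Set.Ici u) u)
      ∧ (∀ u : ℝ, 0 ≤ u → gam0 ω u ∈ Set.Icc (0:ℝ) 1 ∧ gam ω u ∈ Set.Icc (0:ℝ) 1) := by
    filter_upwards [hcad, hrange] with ω h1 h2
    exact ⟨fun u hu => ⟨h1.2.1.1 u hu, h1.2.2.2.1 u hu⟩,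
      fun u hu => ⟨(h2 u hu).2.2.1, (h2 u hu).2.2.2⟩⟩
  have eq1 : ∀ (ω : Ω) (u : ℝ), 0 ≤ u → u ≤ t →
      (∫ r in (0:ℝ)..u, gam0 ω r * Fc r) = ∫ r in (0:ℝ)..u, gam0 ω r * F r := by
    intro ω u hu hut
    apply intervalIntegral.integral_congr
    intro r hr
    rw [Set.uIcc_of_le hu] at hr
    beta_reduce
    rw [hFeqOn r ⟨hr.1, hr.2.trans hut⟩]
  have eq2 : ∀ (ω : Ω) (s u : ℝ), 0 ≤ s → s ≤ u → u ≤ t →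
      (∫ r in s..u, gam ω (r - s) * Fc r) = ∫ r in s..u, gam ω (r - s) * F r := by
    intro ω s u hs hsu hut
    apply intervalIntegral.integral_congr
    intro r hr
    rw [Set.uIcc_of_le hsu] at hr
    beta_reduce
    rw [hFeqOn r ⟨hs.trans hr.1, hr.2.trans hut⟩]
  have termA : ∀ u : ℝ, 0 ≤ u → u ≤ t →
      (∫ ω, gam0 ω u * Real.exp (- ∫ r in (0:ℝ)..u, gam0 ω r * Fc r) ∂P)
        = ∫ ω, gam0 ω u * Real.exp (- ∫ r in (0:ℝ)..u, gam0 ω r * F r) ∂P := by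
    intro u hu hut
    apply integral_congr_ae (ae_of_all _ _)
    intro ω
    beta_reduce
    rw [eq1 ω u hu hut]
  have termB : ∀ (s u : ℝ), 0 ≤ s → s ≤ u → u ≤ t →
      (∫ ω, gam ω (u - s) * Real.exp (- ∫ r in s..u, gam ω (r - s) * Fc r) ∂P)
        = ∫ ω, gam ω (u - s) * Real.exp (- ∫ r in s..u, gam ω (r - s) * F r) ∂P := by
    intro s u hs hsu hut
    apply integral_congr_ae (ae_of_all _ _)
    intro ω
    beta_reduce
    rw [eq2 ω s u hs hsu hut]
  have hSeqc : ∀ u : ℝ, 0 ≤ u → u ≤ t →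
      Sc u = (∫ ω, gam0 ω u * Real.exp (- ∫ r in (0:ℝ)..u, gam0 ω r * Fc r) ∂P)
        + ∫ s in (0:ℝ)..u,
            (∫ ω, gam ω (u - s) * Real.exp (- ∫ r in s..u, gam ω (r - s) * Fc r) ∂P)
              * (Sc s * Fc s) := by
    intro u hu hut
    rw [hSeqOn u ⟨hu, hut⟩, hsyS u hu, termA u hu hut]
    congr 1
    apply intervalIntegral.integral_congr
    intro s hsmem
    rw [Set.uIcc_of_le hu] at hsmem
    beta_reduce
    rw [termB s u hsmem.1 hsmem.2 hut, hFeqOn s ⟨hsmem.1, hsmem.2.trans hut⟩,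
      hSeqOn s ⟨hsmem.1, hsmem.2.trans hut⟩]
  have key := conservation_key P gam0 gam Fc Sc t ht hmg0 hmg hae hFc_meas hSc_meas
    hFc_rc hFc_nn hFc_bd hSc_bd hSeqc
  have final1 : (∫ ω, Real.exp (- ∫ r in (0:ℝ)..t, gam0 ω r * F r) ∂P)
      = ∫ ω, Real.exp (- ∫ r in (0:ℝ)..t, gam0 ω r * Fc r) ∂P := by
    apply integral_congr_ae (ae_of_all _ _)
    intro ω
    beta_reduce
    rw [eq1 ω t ht le_rfl]
  have final2 : (∫ s in (0:ℝ)..t,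
        (∫ ω, Real.exp (- ∫ r in s..t, gam ω (r - s) * F r) ∂P) * (S s * F s))
      = ∫ s in (0:ℝ)..t,
        (∫ ω, Real.exp (- ∫ r in s..t, gam ω (r - s) * Fc r) ∂P) * (Sc s * Fc s) := by
    apply intervalIntegral.integral_congr
    intro s hs
    rw [Set.uIcc_of_le ht] at hs
    beta_reduce
    rw [hFeqOn s hs, hSeqOn s hs]
    congr 1
    apply integral_congr_ae (ae_of_all _ _)
    intro ω
    beta_reduce
    rw [eq2 ω s t hs.1 hs.2 le_rfl]
  rw [final1, final2]
  exact key

end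
end

section
/- Let (S̄, F̄) be a càdlàg solution of the limit epidemic system. Define Ū(t) := 𝔼[1{t ≥ η₀}·exp(−∫₀ᵗ γ₀(r) F̄(r) dr)] + ∫₀ᵗ 𝔼[1{t−s ≥ η}·exp(−∫ₛᵗ γ(r−s) F̄(r) dr)]·S̄(s) F̄(s) ds and Ī(t) := Ī(0)·F₀ᶜ(t) + ∫₀ᵗ Fᶜ(t−s)·S̄(s) F̄(s) ds, where F₀ᶜ(t) := ℙ(η₀ > t | η₀ > 0) and Fᶜ(t) := ℙ(η > t). Then Ū(t) + Ī(t) = 1 for all t ≥ 0. -/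
open MeasureTheory Filter Set ProbabilityTheory
open scoped ENNReal

noncomputable section

variable {Ω : Type*} [MeasurableSpace Ω]

section EpidemicHelpers
open Topology intervalIntegral

variable {Ω' : Type*} [MeasurableSpace Ω']

lemma measurable_comp_countable {q : ℝ → ℝ} (hq : Measurable q)
    (hc : (Set.range q).Countable) (f : ℝ → ℝ) : Measurable (f ∘ q) := by
  intro s _
  show MeasurableSet (q ⁻¹' (f ⁻¹' s))
  set C := f ⁻¹' s
  have : q ⁻¹' C = ⋃ v ∈ (Set.range q ∩ C), q ⁻¹' {v} := by
    ext x
    simp only [Set.mem_preimage, Set.mem_iUnion, Set.mem_inter_iff, Set.mem_range,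
      Set.mem_singleton_iff, exists_prop]
    constructor
    · intro h; exact ⟨q x, ⟨⟨x, rfl⟩, h⟩, rfl⟩
    · rintro ⟨v, ⟨_, hv⟩, rfl⟩; exact hv
  rw [this]
  exact MeasurableSet.biUnion (hc.mono Set.inter_subset_left)
    (fun v _ => hq (measurableSet_singleton v))

lemma Cadlag.measurable_max (f : ℝ → ℝ) (hf : Cadlag f) :
    Measurable (fun x => f (max x 0)) := by
  set q : ℕ → ℝ → ℝ := fun n x => max ((⌈x * (n+1)⌉ : ℝ) / (n+1)) 0 with hqdef
  have hqmeas : ∀ n, Measurable (q n) := by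
    intro n
    exact (((measurable_of_countable _).comp
      ((measurable_id.mul_const _).ceil)).div_const _).max measurable_const
  have hqcount : ∀ n, (Set.range (q n)).Countable := by
    intro n
    have : Set.range (q n) ⊆ Set.range (fun k : ℤ => max ((k:ℝ)/(n+1)) 0) := by
      rintro y ⟨x, rfl⟩
      exact ⟨⌈x * (n+1)⌉, rfl⟩
    exact (Set.countable_range _).mono this
  have hmeas : ∀ n, Measurable (fun x => f (q n x)) := fun n =>
    measurable_comp_countable (hqmeas n) (hqcount n) f
  have htend : ∀ x, Tendsto (fun n => f (q n x)) atTop (𝓝 (f (max x 0))) := by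
    intro x
    set m := max x 0 with hm
    have hm0 : 0 ≤ m := le_max_right _ _
    have hge : ∀ n : ℕ, m ≤ q n x := by
      intro n
      have h1 : x ≤ (⌈x * (n+1)⌉ : ℝ) / (n+1) := by
        rw [le_div_iff₀ (by positivity)]
        exact Int.le_ceil _
      exact max_le_max h1 le_rfl
    have hle : ∀ n : ℕ, q n x ≤ m + 1/(n+1) := by
      intro n
      have hn : (0:ℝ) < (n:ℝ)+1 := by positivity
      have h1 : (⌈x * (n+1)⌉ : ℝ) / (n+1) ≤ (x*((n:ℝ)+1) + 1)/((n:ℝ)+1) := by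
        gcongr
        exact le_of_lt (Int.ceil_lt_add_one _)
      have h3 : (x*((n:ℝ)+1) + 1)/((n:ℝ)+1) = x + 1/((n:ℝ)+1) := by
        field_simp
      rw [h3] at h1
      calc q n x ≤ max (x + 1/((n:ℝ)+1)) 0 := max_le_max h1 le_rfl
        _ ≤ m + 1/((n:ℝ)+1) := by
            rcases le_total (x + 1/((n:ℝ)+1)) 0 with h | h
            · rw [max_eq_right h]
              have h4 : (0:ℝ) ≤ 1/((n:ℝ)+1) := by positivity
              linarith
            · rw [max_eq_left h]
              have : x ≤ m := le_max_left _ _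
              linarith
    have htq : Tendsto (fun n : ℕ => q n x) atTop (𝓝[Set.Ici m] m) := by
      rw [tendsto_nhdsWithin_iff]
      constructor
      · refine tendsto_of_tendsto_of_tendsto_of_le_of_le tendsto_const_nhds ?_ hge hle
        have h5 : Tendsto (fun n : ℕ => 1/((n:ℝ)+1)) atTop (𝓝 0) :=
          tendsto_one_div_add_atTop_nhds_zero_nat
        simpa using tendsto_const_nhds.add h5
      · exact Eventually.of_forall (fun n => hge n)
    exact ((hf.1 m hm0).tendsto).comp htq
  exact measurable_of_tendsto_metrizable hmeas (tendsto_pi_nhds.2 htend)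

lemma Cadlag.bound_on (f : ℝ → ℝ) (hf : Cadlag f) (t : ℝ) :
    ∃ C : ℝ, 0 ≤ C ∧ ∀ x ∈ Set.Icc (0:ℝ) t, |f x| ≤ C := by
  have key : ∀ x : ℝ, ∃ δ : ℝ, 0 < δ ∧ ∃ B : ℝ,
      ∀ y ∈ Set.Ioo (x - δ) (x + δ) ∩ Set.Icc (0:ℝ) t, |f y| ≤ B := by
    intro x
    rcases lt_or_ge x 0 with hx0 | hx0
    · refine ⟨-x, by linarith, 0, ?_⟩
      rintro y ⟨hy1, hy2⟩
      exact absurd (lt_of_lt_of_le hy1.2 (by linarith : x + -x ≤ 0)) (not_lt.2 hy2.1)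
    rcases lt_or_ge t x with hxt | hxt
    · refine ⟨x - t, by linarith, 0, ?_⟩
      rintro y ⟨hy1, hy2⟩
      exact absurd hy1.1 (not_lt.2 (by linarith [hy2.2]))
    have hrc := hf.1 x hx0
    rw [Metric.continuousWithinAt_iff] at hrc
    obtain ⟨δ₁, hδ₁, hb₁⟩ := hrc 1 one_pos
    rcases eq_or_lt_of_le hx0 with hx0' | hx0'
    · refine ⟨δ₁, hδ₁, |f x| + 1, ?_⟩
      rintro y ⟨hy1, hy2⟩
      have hyx : x ≤ y := by rw [← hx0']; exact hy2.1
      have hd : dist y x < δ₁ := by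
        rw [Real.dist_eq, abs_lt]; exact ⟨by linarith [hy1.1], by linarith [hy1.2]⟩
      have h2 := hb₁ hyx hd
      rw [Real.dist_eq] at h2
      linarith [abs_sub_abs_le_abs_sub (f y) (f x)]
    · obtain ⟨l, hl⟩ := hf.2 x hx0'
      rw [Metric.tendsto_nhdsWithin_nhds] at hl
      obtain ⟨δ₂, hδ₂, hb₂⟩ := hl 1 one_pos
      refine ⟨min δ₁ δ₂, lt_min hδ₁ hδ₂, max (|f x|) (|l|) + 1, ?_⟩
      rintro y ⟨hy1, hy2⟩
      rcases le_or_gt x y with hyx | hyx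
      · have hd : dist y x < δ₁ := by
          rw [Real.dist_eq, abs_lt]
          exact ⟨by linarith [hy1.1, min_le_left δ₁ δ₂], by linarith [hy1.2, min_le_left δ₁ δ₂]⟩
        have h2 := hb₁ hyx hd
        rw [Real.dist_eq] at h2
        have h3 : |f x| ≤ max (|f x|) (|l|) := le_max_left _ _
        linarith [abs_sub_abs_le_abs_sub (f y) (f x)]
      · have hd : dist y x < δ₂ := by
          rw [Real.dist_eq, abs_lt]
          exact ⟨by linarith [hy1.1, min_le_right δ₁ δ₂], by linarith [hy1.2, min_le_right δ₁ δ₂]⟩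
        have h2 := hb₂ hyx hd
        rw [Real.dist_eq] at h2
        have h3 : |l| ≤ max (|f x|) (|l|) := le_max_right _ _
        linarith [abs_sub_abs_le_abs_sub (f y) l]
  choose δ hδ B hB using key
  obtain ⟨b', hb'sub, hb'fin, hb'cov⟩ :=
    (isCompact_Icc : IsCompact (Set.Icc (0:ℝ) t)).elim_finite_subcover_image
      (b := Set.Icc (0:ℝ) t) (c := fun x => Set.Ioo (x - δ x) (x + δ x))
      (fun x _ => isOpen_Ioo)
      (fun y hy => Set.mem_biUnion hy ⟨by linarith [hδ y], by linarith [hδ y]⟩)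
  obtain ⟨C0, hC0⟩ := (hb'fin.image B).bddAbove
  refine ⟨max C0 0, le_max_right _ _, ?_⟩
  intro y hy
  obtain ⟨x, hxb', hyx⟩ := Set.mem_iUnion₂.1 (hb'cov hy)
  have h1 := hB x y ⟨hyx, hy⟩
  have h2 : B x ≤ C0 := hC0 (Set.mem_image_of_mem B hxb')
  exact h1.trans (h2.trans (le_max_left _ _))

lemma ae_prod_fst {P : Measure Ω'} [SFinite P] {ν : Measure ℝ} [SFinite ν] {p : Ω' → Prop}
    (h : ∀ᵐ ω ∂P, p ω) : ∀ᵐ q ∂(P.prod ν), p q.1 := by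
  rw [ae_iff] at h ⊢
  refine measure_mono_null (t := (toMeasurable P {ω | ¬ p ω}) ×ˢ Set.univ)
    (fun q hq => Set.mem_prod.2 ⟨subset_toMeasurable P {ω | ¬ p ω} hq, Set.mem_univ _⟩) ?_
  rw [Measure.prod_prod, measure_toMeasurable, h, zero_mul]

lemma ae_prod_snd {P : Measure Ω'} [SFinite P] {ν : Measure ℝ} [SFinite ν] {p : ℝ → Prop}
    (h : ∀ᵐ u ∂ν, p u) : ∀ᵐ q ∂(P.prod ν), p q.2 := by
  rw [ae_iff] at h ⊢
  refine measure_mono_null (t := Set.univ ×ˢ (toMeasurable ν {u | ¬ p u}))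
    (fun q hq => Set.mem_prod.2 ⟨Set.mem_univ _, subset_toMeasurable ν {u | ¬ p u} hq⟩) ?_
  rw [Measure.prod_prod, measure_toMeasurable, h, mul_zero]

lemma measurable_param_integral {α : Type*} [MeasurableSpace α]
    {k : α → ℝ → ℝ} (hk : Measurable (Function.uncurry k))
    {c d : α → ℝ} (hc : Measurable c) (hd : Measurable d) :
    Measurable (fun p => ∫ r in Set.Ioc (c p) (d p), k p r) := by
  have h1 : (fun p => ∫ r in Set.Ioc (c p) (d p), k p r)
      = fun p => ∫ r, (Set.Ioc (c p) (d p)).indicator (k p) r := by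
    ext p; rw [MeasureTheory.integral_indicator measurableSet_Ioc]
  rw [h1]
  have h2 : StronglyMeasurable
      (fun q : α × ℝ => (Set.Ioc (c q.1) (d q.1)).indicator (k q.1) q.2) := by
    have he : (fun q : α × ℝ => (Set.Ioc (c q.1) (d q.1)).indicator (k q.1) q.2)
        = fun q : α × ℝ => if c q.1 < q.2 ∧ q.2 ≤ d q.1 then Function.uncurry k q else 0 := by
      ext q; rw [Set.indicator_apply]
      simp only [Set.mem_Ioc, Function.uncurry]
    rw [he]
    refine Measurable.stronglyMeasurable ?_
    refine Measurable.ite ?_ hk measurable_const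
    exact MeasurableSet.inter
      (measurableSet_lt (hc.comp measurable_fst) measurable_snd)
      (measurableSet_le measurable_snd (hd.comp measurable_fst))
  exact h2.integral_prod_right'.measurable

/- copy of bdd_intervalIntegrable and ftc_exp assumed available; re-import here for test -/
lemma bdd_intervalIntegrable {h : ℝ → ℝ} {a b C : ℝ} (hab : a ≤ b) (hm : Measurable h)
    (hbdd : ∀ x ∈ Set.Icc a b, |h x| ≤ C) : IntervalIntegrable h volume a b := by
  rw [intervalIntegrable_iff_integrableOn_Icc_of_le hab]
  refine Integrable.mono' (integrable_const C) hm.aestronglyMeasurable.restrict ?_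
  rw [ae_restrict_iff' measurableSet_Icc]
  exact Filter.Eventually.of_forall (fun x hx => by
    simpa [Real.norm_eq_abs] using hbdd x hx)

lemma ftc_exp {h : ℝ → ℝ} {a b C : ℝ} (hab : a ≤ b) (hm : Measurable h)
    (hbdd : ∀ x ∈ Set.Icc a b, |h x| ≤ C)
    (hrc : ∀ u ∈ Set.Ico a b, ContinuousWithinAt h (Set.Ici u) u) :
    ∫ u in a..b, h u * Real.exp (-∫ r in a..u, h r)
      = 1 - Real.exp (-∫ r in a..b, h r) := by
  have hint : IntervalIntegrable h volume a b := bdd_intervalIntegrable hab hm hbdd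
  set A : ℝ → ℝ := fun u => ∫ r in a..u, h r with hA
  have hIOn : IntegrableOn h (Set.uIcc a b) volume := by
    rw [Set.uIcc_of_le hab]
    exact (intervalIntegrable_iff_integrableOn_Icc_of_le hab).1 hint
  have hcontA : ContinuousOn A (Set.Icc a b) := by
    have := intervalIntegral.continuousOn_primitive_interval hIOn
    rwa [Set.uIcc_of_le hab] at this
  have hcontf : ContinuousOn (fun u => Real.exp (-A u)) (Set.Icc a b) :=
    (Real.continuous_exp.comp continuous_neg).comp_continuousOn hcontA
  have hderiv : ∀ x ∈ Set.Ioo a b,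
      HasDerivWithinAt (fun u => Real.exp (-A u)) (-(h x * Real.exp (-A x))) (Set.Ioi x) x := by
    intro x hx
    have hintax : IntervalIntegrable h volume a x := by
      refine hint.mono_set ?_
      rw [Set.uIcc_of_le hab, Set.uIcc_of_le hx.1.le]
      exact Set.Icc_subset_Icc le_rfl hx.2.le
    have hmeasf : StronglyMeasurableAtFilter h (𝓝[Set.Ioi x] x) volume :=
      ⟨Set.univ, Filter.univ_mem, hm.aestronglyMeasurable.restrict⟩
    have hA' : HasDerivWithinAt A (h x) (Set.Ici x) x :=
      intervalIntegral.integral_hasDerivWithinAt_right hintax hmeasf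
        ((hrc x ⟨hx.1.le, hx.2⟩).mono Set.Ioi_subset_Ici_self)
    have hexp : HasDerivAt Real.exp (Real.exp (-A x)) (-A x) := Real.hasDerivAt_exp _
    have hcomp := hexp.comp_hasDerivWithinAt x (hA'.neg)
    have h2 : Real.exp (-A x) * -h x = -(h x * Real.exp (-A x)) := by ring
    rw [h2] at hcomp
    exact hcomp.mono Set.Ioi_subset_Ici_self
  have hf'int : IntervalIntegrable (fun u => -(h u * Real.exp (-A u))) volume a b := by
    refine (hint.mul_continuousOn ?_).neg
    rwa [Set.uIcc_of_le hab]
  have hmain := intervalIntegral.integral_eq_sub_of_hasDeriv_right_of_le hab hcontf hderiv hf'int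
  have hAa : A a = 0 := intervalIntegral.integral_same
  rw [intervalIntegral.integral_neg] at hmain
  rw [show (1:ℝ) = Real.exp (-A a) by rw [hAa]; simp]
  have hm2 : -∫ u in a..b, h u * Real.exp (-A u) = Real.exp (-A b) - Real.exp (-A a) := hmain
  linarith

lemma exp_expectation_identity {P : Measure Ω'} [IsProbabilityMeasure P]
    {g : Ω' → ℝ → ℝ} (hg : Measurable (Function.uncurry g))
    {Fm : ℝ → ℝ} (hFm : Measurable Fm) {a b CF : ℝ} (hab : a ≤ b)
    (hFb : ∀ u ∈ Set.Icc a b, 0 ≤ Fm u ∧ Fm u ≤ CF)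
    (hFrc : ∀ u ∈ Set.Ico a b, ContinuousWithinAt Fm (Set.Ici u) u)
    (hgood : ∀ᵐ ω ∂P, (∀ u ∈ Set.Icc a b, 0 ≤ g ω u ∧ g ω u ≤ 1) ∧
      (∀ u ∈ Set.Ico a b, ContinuousWithinAt (fun r => g ω r) (Set.Ici u) u)) :
    ∫ ω, Real.exp (-∫ r in a..b, g ω r * Fm r) ∂P
      = 1 - ∫ u in a..b, Fm u *
          (∫ ω, g ω u * Real.exp (-∫ r in a..u, g ω r * Fm r) ∂P) := by
  have hCF : 0 ≤ CF := le_trans (hFb a ⟨le_rfl, hab⟩).1 (hFb a ⟨le_rfl, hab⟩).2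
  set ν : Measure ℝ := volume.restrict (Set.Ioc a b) with hν
  set A : Ω' → ℝ → ℝ := fun ω u => ∫ r in a..u, g ω r * Fm r with hA
  set B : Ω' × ℝ → ℝ := fun q => ∫ r in Set.Ioc a q.2, g q.1 r * Fm r with hB
  have hkm : Measurable (Function.uncurry (fun (q : Ω' × ℝ) (r : ℝ) => g q.1 r * Fm r)) := by
    apply Measurable.mul
    · exact hg.comp ((measurable_fst.comp measurable_fst).prodMk measurable_snd)
    · exact hFm.comp measurable_snd
  have hBm : Measurable B :=
    measurable_param_integral hkm measurable_const measurable_snd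
  have hsecm : ∀ ω, Measurable (fun r => g ω r * Fm r) := by
    intro ω
    exact (hg.comp measurable_prodMk_left).mul hFm
  have hBA : ∀ ω, ∀ u, a ≤ u → A ω u = B (ω, u) := by
    intro ω u hu
    exact intervalIntegral.integral_of_le hu
  -- pointwise FTC for good ω
  have hftc : ∀ᵐ ω ∂P, ∫ u in a..b, (g ω u * Fm u) * Real.exp (-A ω u)
      = 1 - Real.exp (-A ω b) := by
    filter_upwards [hgood] with ω hω
    refine ftc_exp (C := CF) hab (hsecm ω) ?_ ?_
    · intro x hx
      have h1 := hω.1 x hx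
      have h2 := hFb x hx
      rw [abs_mul]
      calc |g ω x| * |Fm x| ≤ 1 * CF := by
            apply mul_le_mul _ _ (abs_nonneg _) zero_le_one
            · rw [abs_le]; exact ⟨by linarith [h1.1], h1.2⟩
            · rw [abs_le]; exact ⟨by linarith [h2.1], h2.2⟩
        _ = CF := one_mul CF
    · intro u hu
      exact (hω.2 u hu).mul (hFrc u hu)
  -- nonnegativity of A for good ω
  have hAnn : ∀ᵐ ω ∂P, ∀ u ∈ Set.Icc a b, 0 ≤ A ω u := by
    filter_upwards [hgood] with ω hω
    intro u hu
    apply intervalIntegral.integral_nonneg hu.1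
    intro r hr
    have h1 := hω.1 r ⟨hr.1, hr.2.trans hu.2⟩
    have h2 := hFb r ⟨hr.1, hr.2.trans hu.2⟩
    exact mul_nonneg h1.1 h2.1
  -- integrability of ω ↦ exp (-A ω b)
  have hexpb_eq : (fun ω => Real.exp (-A ω b)) = fun ω => Real.exp (-B (ω, b)) := by
    ext ω; rw [hBA ω b hab]
  have hexpb_meas : Measurable (fun ω => Real.exp (-A ω b)) := by
    rw [hexpb_eq]
    exact (hBm.comp (measurable_id.prodMk measurable_const)).neg.exp
  have hexpb_int : Integrable (fun ω => Real.exp (-A ω b)) P := by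
    refine Integrable.mono' (integrable_const 1) hexpb_meas.aestronglyMeasurable ?_
    filter_upwards [hAnn] with ω hω
    rw [Real.norm_eq_abs, abs_of_pos (Real.exp_pos _)]
    exact Real.exp_le_one_iff.2 (neg_nonpos.2 (hω b ⟨hab, le_rfl⟩))
  -- Fubini on the LHS of the averaged FTC
  have hprodm : Measurable (Function.uncurry
      (fun ω u => (g ω u * Fm u) * Real.exp (-B (ω, u)))) := by
    apply Measurable.mul
    · exact (hg.mul (hFm.comp measurable_snd))
    · exact (hBm.neg.exp).comp measurable_id
  have hprodint : Integrable (Function.uncurry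
      (fun ω u => (g ω u * Fm u) * Real.exp (-B (ω, u)))) (P.prod ν) := by
    refine Integrable.mono' (integrable_const CF) hprodm.aestronglyMeasurable ?_
    have h0 : ∀ᵐ ω ∂P, (∀ u ∈ Set.Icc a b, 0 ≤ g ω u ∧ g ω u ≤ 1)
        ∧ (∀ u ∈ Set.Icc a b, 0 ≤ A ω u) := by
      filter_upwards [hgood, hAnn] with ω h1 h2
      exact ⟨h1.1, h2⟩
    have h1 : ∀ᵐ q ∂(P.prod ν), (∀ u ∈ Set.Icc a b, 0 ≤ g q.1 u ∧ g q.1 u ≤ 1)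
        ∧ (∀ u ∈ Set.Icc a b, 0 ≤ A q.1 u) := ae_prod_fst (ν := ν) h0
    have h2 : ∀ᵐ q ∂(P.prod ν), q.2 ∈ Set.Ioc a b :=
      ae_prod_snd (ae_restrict_mem measurableSet_Ioc)
    filter_upwards [h1, h2] with q hq1 hq2
    have hu : q.2 ∈ Set.Icc a b := ⟨hq2.1.le, hq2.2⟩
    have hBAq : B q = A q.1 q.2 := by
      rw [hBA q.1 q.2 hu.1]
    rw [Function.uncurry, Real.norm_eq_abs, abs_mul, abs_mul, hBAq,
      abs_of_pos (Real.exp_pos _)]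
    have hgb := hq1.1 q.2 hu
    have hfb := hFb q.2 hu
    have hexple : Real.exp (-(A q.1 q.2)) ≤ 1 :=
      Real.exp_le_one_iff.2 (neg_nonpos.2 (hq1.2 q.2 hu))
    have : |g q.1 q.2| ≤ 1 := by rw [abs_le]; exact ⟨by linarith [hgb.1], hgb.2⟩
    have h4 : |Fm q.2| ≤ CF := by rw [abs_le]; exact ⟨by linarith [hfb.1], hfb.2⟩
    calc |g q.1 q.2| * |Fm q.2| * Real.exp (-(A q.1 q.2))
        ≤ 1 * CF * 1 := by
          apply mul_le_mul _ hexple (le_of_lt (Real.exp_pos _)) (by positivity)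
          exact mul_le_mul this h4 (abs_nonneg _) zero_le_one
      _ = CF := by ring
  have hswap := MeasureTheory.integral_integral_swap
    (f := fun ω u => (g ω u * Fm u) * Real.exp (-B (ω, u))) (μ := P) (ν := ν) hprodint
  -- average the FTC identity
  have havg : ∫ ω, (∫ u in a..b, (g ω u * Fm u) * Real.exp (-A ω u)) ∂P
      = ∫ ω, (1 - Real.exp (-A ω b)) ∂P := MeasureTheory.integral_congr_ae hftc
  have hrhs : ∫ ω, (1 - Real.exp (-A ω b)) ∂P = 1 - ∫ ω, Real.exp (-A ω b) ∂P := by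
    rw [integral_sub (integrable_const 1) hexpb_int, MeasureTheory.integral_const]
    simp
  -- identify the LHS with the u-integral
  have hlhs : ∫ ω, (∫ u in a..b, (g ω u * Fm u) * Real.exp (-A ω u)) ∂P
      = ∫ u in a..b, Fm u * (∫ ω, g ω u * Real.exp (-A ω u) ∂P) := by
    have e1 : ∀ ω, ∫ u in a..b, (g ω u * Fm u) * Real.exp (-A ω u)
        = ∫ u, (fun u => (g ω u * Fm u) * Real.exp (-B (ω, u))) u ∂ν := by
      intro ω
      rw [intervalIntegral.integral_of_le hab]
      refine setIntegral_congr_fun measurableSet_Ioc (fun u hu => ?_)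
      rw [hBA ω u hu.1.le]
    have e2 : ∫ ω, (∫ u, (g ω u * Fm u) * Real.exp (-B (ω, u)) ∂ν) ∂P
        = ∫ u, (∫ ω, (g ω u * Fm u) * Real.exp (-B (ω, u)) ∂P) ∂ν := hswap
    have e3 : ∫ u, (∫ ω, (g ω u * Fm u) * Real.exp (-B (ω, u)) ∂P) ∂ν
        = ∫ u in a..b, Fm u * (∫ ω, g ω u * Real.exp (-A ω u) ∂P) := by
      rw [intervalIntegral.integral_of_le hab]
      refine setIntegral_congr_fun measurableSet_Ioc (fun u hu => ?_)
      have : ∀ ω, (g ω u * Fm u) * Real.exp (-B (ω, u))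
          = Fm u * (g ω u * Real.exp (-A ω u)) := by
        intro ω; rw [← hBA ω u hu.1.le]; ring
      simp_rw [this]
      exact MeasureTheory.integral_const_mul _ _
    calc ∫ ω, (∫ u in a..b, (g ω u * Fm u) * Real.exp (-A ω u)) ∂P
        = ∫ ω, (∫ u, (g ω u * Fm u) * Real.exp (-B (ω, u)) ∂ν) ∂P := by
          exact MeasureTheory.integral_congr_ae (Filter.Eventually.of_forall (fun ω => e1 ω))
      _ = _ := by rw [e2, e3]
  have hfin : (∫ ω, Real.exp (-A ω b) ∂P)
      = 1 - ∫ u in a..b, Fm u * (∫ ω, g ω u * Real.exp (-A ω u) ∂P) := by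
    have := hlhs.symm.trans (havg.trans hrhs)
    linarith
  exact hfin

lemma triangle_swap {φ : ℝ → ℝ → ℝ} {t C : ℝ} (ht : 0 ≤ t) (hC : 0 ≤ C)
    (hm : Measurable (Function.uncurry φ))
    (hbdd : ∀ u ∈ Set.Icc (0:ℝ) t, ∀ s ∈ Set.Icc (0:ℝ) t, s < u → |φ u s| ≤ C) :
    ∫ s in (0:ℝ)..t, ∫ u in s..t, φ u s = ∫ u in (0:ℝ)..t, ∫ s in (0:ℝ)..u, φ u s := by
  set ν : Measure ℝ := volume.restrict (Set.Ioc 0 t) with hν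
  set ψ : ℝ → ℝ → ℝ := fun s u => if s < u then φ u s else 0 with hψ
  have hψm : Measurable (Function.uncurry ψ) := by
    refine Measurable.ite (measurableSet_lt measurable_fst measurable_snd) ?_ measurable_const
    exact hm.comp (measurable_snd.prodMk measurable_fst)
  have hψint : Integrable (Function.uncurry ψ) (ν.prod ν) := by
    refine Integrable.mono' (integrable_const C) hψm.aestronglyMeasurable ?_
    have h1 : ∀ᵐ q ∂(ν.prod ν), q.1 ∈ Set.Ioc (0:ℝ) t ∧ q.2 ∈ Set.Ioc (0:ℝ) t := by
      have h1' : ∀ᵐ q ∂(((volume : Measure ℝ).prod volume).restrict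
          ((Set.Ioc (0:ℝ) t) ×ˢ (Set.Ioc (0:ℝ) t))),
          q ∈ (Set.Ioc (0:ℝ) t) ×ˢ (Set.Ioc (0:ℝ) t) :=
        ae_restrict_mem (measurableSet_Ioc.prod measurableSet_Ioc)
      rw [hν, Measure.prod_restrict]
      exact h1'.mono (fun q hq => hq)
    filter_upwards [h1] with q hq
    rw [Real.norm_eq_abs]
    show |if q.1 < q.2 then φ q.2 q.1 else 0| ≤ C
    by_cases hlt : q.1 < q.2
    · rw [if_pos hlt]
      exact hbdd q.2 ⟨hq.2.1.le, hq.2.2⟩ q.1 ⟨hq.1.1.le, hq.1.2⟩ hlt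
    · rw [if_neg hlt, abs_zero]; exact hC
  have hswap := MeasureTheory.integral_integral_swap (f := ψ) (μ := ν) (ν := ν) hψint
  have hL : ∫ s in (0:ℝ)..t, ∫ u in s..t, φ u s = ∫ s, (∫ u, ψ s u ∂ν) ∂ν := by
    rw [intervalIntegral.integral_of_le ht]
    refine setIntegral_congr_fun measurableSet_Ioc (fun s hs => ?_)
    have e1 : (fun u => ψ s u) = (Set.Ioi s).indicator (fun u => φ u s) := by
      ext u
      rw [Set.indicator_apply]
      simp only [hψ, Set.mem_Ioi]
    rw [e1, hν, MeasureTheory.setIntegral_indicator measurableSet_Ioi]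
    have e2 : Set.Ioc 0 t ∩ Set.Ioi s = Set.Ioc s t := by
      ext u
      simp only [Set.mem_inter_iff, Set.mem_Ioc, Set.mem_Ioi]
      constructor
      · rintro ⟨⟨_, hu2⟩, hu3⟩; exact ⟨hu3, hu2⟩
      · rintro ⟨hu1, hu2⟩; exact ⟨⟨lt_trans hs.1 hu1, hu2⟩, hu1⟩
    rw [e2, intervalIntegral.integral_of_le hs.2]
  have hR : ∫ u in (0:ℝ)..t, ∫ s in (0:ℝ)..u, φ u s = ∫ u, (∫ s, ψ s u ∂ν) ∂ν := by
    rw [intervalIntegral.integral_of_le ht]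
    refine setIntegral_congr_fun measurableSet_Ioc (fun u hu => ?_)
    have e1 : (fun s => ψ s u) = (Set.Iio u).indicator (fun s => φ u s) := by
      ext s
      rw [Set.indicator_apply]
      simp only [hψ, Set.mem_Iio]
    rw [e1, hν, MeasureTheory.setIntegral_indicator measurableSet_Iio]
    have e2 : Set.Ioc 0 t ∩ Set.Iio u = Set.Ioo 0 u := by
      ext s
      simp only [Set.mem_inter_iff, Set.mem_Ioc, Set.mem_Iio, Set.mem_Ioo]
      constructor
      · rintro ⟨⟨hs1, _⟩, hs3⟩; exact ⟨hs1, hs3⟩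
      · rintro ⟨hs1, hs2⟩; exact ⟨⟨hs1, le_trans hs2.le hu.2⟩, hs2⟩
    rw [e2, intervalIntegral.integral_of_le hu.1.le, MeasureTheory.integral_Ioc_eq_integral_Ioo]
  rw [hL, hR, hswap]

lemma absorb {P : Measure Ω'} [IsProbabilityMeasure P] {e : Ω' → ℝ} {A : Set Ω'} {ind : Ω' → ℝ}
    (hA : MeasurableSet A) (hmeas : AEStronglyMeasurable e P) (hbdd : ∀ᵐ ω ∂P, |e ω| ≤ 1)
    (hone : ∀ᵐ ω ∂P, ω ∈ A → e ω = 1)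
    (hind : ∀ᵐ ω ∂P, (ω ∈ A → ind ω = 0) ∧ (ω ∉ A → ind ω = 1)) :
    ∫ ω, ind ω * e ω ∂P = (∫ ω, e ω ∂P) - (P A).toReal := by
  classical
  have he_int : Integrable e P := by
    refine Integrable.mono' (integrable_const 1) hmeas ?_
    simpa [Real.norm_eq_abs] using hbdd
  have h1 : ∫ ω, ind ω * e ω ∂P = ∫ ω, Aᶜ.indicator e ω ∂P := by
    refine MeasureTheory.integral_congr_ae ?_
    filter_upwards [hind] with ω hω
    by_cases h : ω ∈ A
    · rw [hω.1 h, Set.indicator_of_notMem (by simpa using h), zero_mul]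
    · rw [hω.2 h, Set.indicator_of_mem (by simpa using h), one_mul]
  rw [h1, MeasureTheory.integral_indicator hA.compl]
  have h2 : ∫ ω in A, e ω ∂P + ∫ ω in Aᶜ, e ω ∂P = ∫ ω, e ω ∂P :=
    MeasureTheory.integral_add_compl hA he_int
  have h3 : ∫ ω in A, e ω ∂P = (P A).toReal := by
    have : ∫ ω in A, e ω ∂P = ∫ _ω in A, (1:ℝ) ∂P := by
      refine MeasureTheory.setIntegral_congr_ae hA ?_
      filter_upwards [hone] with ω hω h
      exact hω h
    rw [this, MeasureTheory.setIntegral_const]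
    simp [Measure.real]
  linarith

lemma cadlag_pos_rat {f : ℝ → ℝ} (hf : Cadlag f) {s ε : ℝ} (hs : 0 ≤ s) (hε : 0 < ε)
    (hfs : 0 < f s) : ∃ q : ℚ, s ≤ (q:ℝ) ∧ (q:ℝ) < s + ε ∧ 0 < f q := by
  have hc := hf.1 s hs
  rw [Metric.continuousWithinAt_iff] at hc
  obtain ⟨δ, hδ, hb⟩ := hc (f s) hfs
  obtain ⟨q, hq1, hq2⟩ := exists_rat_btwn (lt_add_of_pos_right s (lt_min hδ hε))
  refine ⟨q, hq1.le, lt_of_lt_of_le hq2 (by linarith [min_le_right δ ε]), ?_⟩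
  have hd : dist ((q:ℝ)) s < δ := by
    rw [Real.dist_eq, abs_of_nonneg (by linarith)]
    linarith [min_le_left δ ε]
  have h2 := hb (show (q:ℝ) ∈ Set.Ici s from hq1.le) hd
  rw [Real.dist_eq, abs_lt] at h2
  linarith [h2.1]

lemma etaSup_gt_iff {f : ℝ → ℝ} (hf : Cadlag f) {t : ℝ} (ht : 0 ≤ t) :
    t < sSup {s : ℝ | 0 ≤ s ∧ 0 < f s} ↔
      ((∃ n : ℕ, ∀ q : ℚ, 0 ≤ (q:ℝ) → 0 < f q → (q:ℝ) ≤ n) ∧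
        (∃ q : ℚ, t < (q:ℝ) ∧ 0 < f q)) := by
  set S := {s : ℝ | 0 ≤ s ∧ 0 < f s} with hS
  constructor
  · intro h
    have hne : S.Nonempty := by
      by_contra h'
      rw [Set.not_nonempty_iff_eq_empty] at h'
      rw [h', Real.sSup_empty] at h
      linarith
    have hbdd : BddAbove S := by
      by_contra h'
      rw [Real.sSup_of_not_bddAbove h'] at h
      linarith
    obtain ⟨M, hM⟩ := hbdd
    constructor
    · refine ⟨⌈max M 0⌉₊, fun q hq0 hqf => ?_⟩
      calc (q:ℝ) ≤ M := hM ⟨hq0, hqf⟩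
        _ ≤ max M 0 := le_max_left _ _
        _ ≤ ⌈max M 0⌉₊ := Nat.le_ceil _
    · obtain ⟨s, hsS, hts⟩ := exists_lt_of_lt_csSup hne h
      obtain ⟨q, hq1, _, hq3⟩ := cadlag_pos_rat hf hsS.1 one_pos hsS.2
      exact ⟨q, lt_of_lt_of_le hts hq1, hq3⟩
  · rintro ⟨⟨n, hn⟩, ⟨q, hq1, hq2⟩⟩
    have hq0 : 0 ≤ (q:ℝ) := le_trans ht hq1.le
    have hbdd : BddAbove S := by
      refine ⟨n, ?_⟩
      rintro s ⟨hs0, hsf⟩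
      obtain ⟨q', h1, _, h3⟩ := cadlag_pos_rat hf hs0 one_pos hsf
      exact le_trans h1 (hn q' (le_trans hs0 h1) h3)
    exact lt_of_lt_of_le hq1 (le_csSup hbdd ⟨hq0, hq2⟩)

lemma measurable_etaSet {g : Ω' → ℝ → ℝ} (hg : Measurable (Function.uncurry g)) (t : ℝ) :
    MeasurableSet {ω | (∃ n : ℕ, ∀ q : ℚ, 0 ≤ (q:ℝ) → 0 < g ω q → (q:ℝ) ≤ n) ∧
      (∃ q : ℚ, t < (q:ℝ) ∧ 0 < g ω (q:ℝ))} := by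
  have hq : ∀ c : ℝ, Measurable (fun ω => g ω c) := fun c =>
    hg.comp (measurable_id.prodMk measurable_const)
  have hsplit : {ω : Ω' | (∃ n : ℕ, ∀ q : ℚ, 0 ≤ (q:ℝ) → 0 < g ω q → (q:ℝ) ≤ n) ∧
      (∃ q : ℚ, t < (q:ℝ) ∧ 0 < g ω (q:ℝ))}
      = (⋃ n : ℕ, ⋂ q : ℚ, {ω | 0 ≤ (q:ℝ) → 0 < g ω q → (q:ℝ) ≤ n})
        ∩ (⋃ q : ℚ, {ω | t < (q:ℝ) ∧ 0 < g ω (q:ℝ)}) := by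
    ext ω
    simp only [Set.mem_setOf_eq, Set.mem_inter_iff, Set.mem_iUnion, Set.mem_iInter]
  rw [hsplit]
  apply MeasurableSet.inter
  · refine MeasurableSet.iUnion (fun n => MeasurableSet.iInter (fun q => ?_))
    by_cases h1 : (0:ℝ) ≤ (q:ℝ)
    · by_cases h2 : ((q:ℝ)) ≤ n
      · have : {ω : Ω' | 0 ≤ (q:ℝ) → 0 < g ω q → (q:ℝ) ≤ n} = Set.univ := by
          ext ω; simp [h1, h2]
        rw [this]; exact MeasurableSet.univ
      · have : {ω : Ω' | 0 ≤ (q:ℝ) → 0 < g ω q → (q:ℝ) ≤ n}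
            = (fun ω => g ω q) ⁻¹' (Set.Iic 0) := by
          ext ω
          simp only [Set.mem_setOf_eq, Set.mem_preimage, Set.mem_Iic]
          constructor
          · intro h
            by_contra h'
            exact h2 (h h1 (not_le.1 h'))
          · intro h _ h''
            linarith
        rw [this]; exact hq q measurableSet_Iic
    · have : {ω : Ω' | 0 ≤ (q:ℝ) → 0 < g ω q → (q:ℝ) ≤ n} = Set.univ := by
        ext ω; simp [h1]
      rw [this]; exact MeasurableSet.univ
  · refine MeasurableSet.iUnion (fun q => ?_)
    by_cases h1 : t < (q:ℝ)
    · have : {ω : Ω' | t < (q:ℝ) ∧ 0 < g ω (q:ℝ)} = (fun ω => g ω q) ⁻¹' (Set.Ioi 0) := by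
        ext ω; simp [h1]
      rw [this]; exact hq q measurableSet_Ioi
    · have : {ω : Ω' | t < (q:ℝ) ∧ 0 < g ω (q:ℝ)} = ∅ := by
        ext ω; simp [h1]
      rw [this]; exact MeasurableSet.empty

lemma gam_eq_zero_of_lt_etaSup {lamP gamP : ℝ → ℝ} {b r : ℝ}
    (hsupp : ∀ s u : ℝ, 0 ≤ s → 0 ≤ u → 0 < lamP s → 0 < gamP u → s ≤ u)
    (hr0 : 0 ≤ r) (hrb : r ≤ b) (hgn : 0 ≤ gamP r)
    (hlt : b < sSup {s : ℝ | 0 ≤ s ∧ 0 < lamP s}) : gamP r = 0 := by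
  by_contra hne
  have hpos : 0 < gamP r := lt_of_le_of_ne hgn (Ne.symm hne)
  have hne' : {s : ℝ | 0 ≤ s ∧ 0 < lamP s}.Nonempty := by
    by_contra h'
    rw [Set.not_nonempty_iff_eq_empty] at h'
    rw [h', Real.sSup_empty] at hlt
    linarith
  have hub : ∀ s ∈ {s : ℝ | 0 ≤ s ∧ 0 < lamP s}, s ≤ r :=
    fun s hs => hsupp s r hs.1 hr0 hs.2 hpos
  have := csSup_le hne' hub
  linarith

end EpidemicHelpers

/-- For a càdlàg solution `(S̄, F̄)` of the limit epidemic system, the limiting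
fractions of uninfectious and infectious individuals satisfy `Ū(t) + Ī(t) = 1` for all `t ≥ 0`. -/
theorem U_plus_I_eq_one
    {Ω : Type*} [MeasurableSpace Ω] (P : Measure Ω) [IsProbabilityMeasure P]
    (lamStar : ℝ) (lam0 gam0 lam gam : Ω → ℝ → ℝ)
    (hctx : BaseContext P lamStar lam0 gam0 lam gam)
    (S F U I : ℝ → ℝ)
    (hsol : IsLimitSolution P lam0 gam0 lam gam S F)
    (hU : ∀ t : ℝ, U t =
      (∫ ω, (if etaSup lam0 ω ≤ t then (1:ℝ) else 0)
          * Real.exp (- ∫ r in (0:ℝ)..t, gam0 ω r * F r) ∂P)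
        + ∫ s in (0:ℝ)..t,
            (∫ ω, (if etaSup lam ω ≤ t - s then (1:ℝ) else 0)
                * Real.exp (- ∫ r in s..t, gam ω (r - s) * F r) ∂P) * (S s * F s))
    (hI : ∀ t : ℝ, I t = IbarZero P lam0 * FZeroc P lam0 t
        + ∫ s in (0:ℝ)..t, survFc P lam (t - s) * (S s * F s)) :
    ∀ t : ℝ, 0 ≤ t → U t + I t = 1 := by
  classical
  obtain ⟨hlamStar, hmlam0, hmgam0, hmlam, hmgam, hcad, hbd, hsup, hsup0⟩ := hctx
  obtain ⟨hScad, hFcad, hnonneg, hSeq, hFeq⟩ := hsol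
  intro t ht
  -- measurable modifications of S and F
  set Fm : ℝ → ℝ := fun x => F (max x 0) with hFmdef
  set Sm : ℝ → ℝ := fun x => S (max x 0) with hSmdef
  have hFm_meas : Measurable Fm := Cadlag.measurable_max F hFcad
  have hSm_meas : Measurable Sm := Cadlag.measurable_max S hScad
  have hFm_eq : ∀ x : ℝ, 0 ≤ x → Fm x = F x := fun x hx => by
    simp only [hFmdef, max_eq_left hx]
  have hSm_eq : ∀ x : ℝ, 0 ≤ x → Sm x = S x := fun x hx => by
    simp only [hSmdef, max_eq_left hx]
  obtain ⟨CF, hCF0, hCFb⟩ := Cadlag.bound_on F hFcad t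
  obtain ⟨CS, hCS0, hCSb⟩ := Cadlag.bound_on S hScad t
  have hFm_bd : ∀ u ∈ Set.Icc (0:ℝ) t, 0 ≤ Fm u ∧ Fm u ≤ CF := by
    intro u hu
    rw [hFm_eq u hu.1]
    exact ⟨(hnonneg u hu.1).2, (abs_le.1 (hCFb u hu)).2⟩
  have hSm_bd : ∀ u ∈ Set.Icc (0:ℝ) t, 0 ≤ Sm u ∧ Sm u ≤ CS := by
    intro u hu
    rw [hSm_eq u hu.1]
    exact ⟨(hnonneg u hu.1).1, (abs_le.1 (hCSb u hu)).2⟩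
  have hFm_rc : ∀ u : ℝ, 0 ≤ u → ContinuousWithinAt Fm (Set.Ici u) u := by
    intro u hu
    exact (hFcad.1 u hu).congr (fun y hy => hFm_eq y (le_trans hu hy)) (hFm_eq u hu)
  -- combined susceptible-force product
  set W : ℝ → ℝ := fun s => Sm s * Fm s with hWdef
  have hW_meas : Measurable W := hSm_meas.mul hFm_meas
  have hW_eq : ∀ s : ℝ, 0 ≤ s → W s = S s * F s := fun s hs => by
    simp only [hWdef, hSm_eq s hs, hFm_eq s hs]
  have hW_bd : ∀ s ∈ Set.Icc (0:ℝ) t, |W s| ≤ CS * CF := by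
    intro s hs
    simp only [hWdef]
    rw [abs_mul]
    have h1 := hSm_bd s hs
    have h2 := hFm_bd s hs
    apply mul_le_mul
    · rw [abs_of_nonneg h1.1]; exact h1.2
    · rw [abs_of_nonneg h2.1]; exact h2.2
    · exact abs_nonneg _
    · exact hCS0
  -- the exponential factors and their measurable (Ioc) forms
  set e0 : Ω → ℝ := fun ω => Real.exp (- ∫ r in (0:ℝ)..t, gam0 ω r * Fm r) with he0def
  have hk0m : Measurable (Function.uncurry (fun (ω : Ω) (r : ℝ) => gam0 ω r * Fm r)) :=
    hmgam0.mul (hFm_meas.comp measurable_snd)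
  have hE0meas : Measurable e0 := by
    have he : e0 = fun ω => Real.exp (-(∫ r in Set.Ioc (0:ℝ) t, gam0 ω r * Fm r)) := by
      funext ω
      simp only [he0def]
      rw [intervalIntegral.integral_of_le ht]
    rw [he]
    exact ((measurable_param_integral hk0m measurable_const measurable_const).neg).exp
  set esI : ℝ → Ω → ℝ :=
    fun s ω => Real.exp (- ∫ r in s..t, gam ω (r - s) * Fm r) with hesIdef
  set esC : ℝ → Ω → ℝ :=
    fun s ω => Real.exp (-(∫ r in Set.Ioc s t, gam ω (r - s) * Fm r)) with hesCdef
  have hes_eq : ∀ s : ℝ, s ≤ t → ∀ ω, esI s ω = esC s ω := by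
    intro s hs ω
    simp only [hesIdef, hesCdef]
    rw [intervalIntegral.integral_of_le hs]
  have hksm : Measurable (Function.uncurry
      (fun (p : ℝ × Ω) (r : ℝ) => gam p.2 (r - p.1) * Fm r)) := by
    apply Measurable.mul
    · exact hmgam.comp (measurable_fst.snd.prodMk
        (measurable_snd.sub measurable_fst.fst))
    · exact hFm_meas.comp measurable_snd
  have hesC_joint : Measurable (fun p : ℝ × Ω => esC p.1 p.2) := by
    have h1 : Measurable (fun p : ℝ × Ω =>
        ∫ r in Set.Ioc p.1 t, gam p.2 (r - p.1) * Fm r) :=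
      measurable_param_integral hksm measurable_fst measurable_const
    exact (h1.neg).exp
  set ES : ℝ → ℝ := fun s => ∫ ω, esC s ω ∂P with hESdef
  have hES_meas : Measurable ES :=
    (hesC_joint.stronglyMeasurable.integral_prod_right').measurable
  have hES_bd : ∀ s ∈ Set.Icc (0:ℝ) t, |ES s| ≤ 1 := by
    intro s hs
    have hae : ∀ᵐ ω ∂P, ‖esC s ω‖ ≤ 1 := by
      filter_upwards [hbd] with ω hω
      simp only [hesCdef]
      rw [Real.norm_eq_abs, abs_of_pos (Real.exp_pos _)]
      apply Real.exp_le_one_iff.2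
      rw [neg_nonpos]
      apply MeasureTheory.setIntegral_nonneg measurableSet_Ioc
      intro r hr
      apply mul_nonneg
      · exact (hω (r - s) (by linarith [hr.1, hs.1])).2.2.2.1
      · exact (hFm_bd r ⟨le_trans hs.1 hr.1.le, hr.2⟩).1
    have := MeasureTheory.norm_integral_le_of_norm_le_const hae (f := fun ω => esC s ω)
    rw [Real.norm_eq_abs] at this
    simpa using this
  -- G functions
  set G0I : ℝ → ℝ := fun u =>
    ∫ ω, gam0 ω u * Real.exp (- ∫ r in (0:ℝ)..u, gam0 ω r * Fm r) ∂P with hG0Idef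
  set G0C : ℝ → ℝ := fun u =>
    ∫ ω, gam0 ω u * Real.exp (-(∫ r in Set.Ioc (0:ℝ) u, gam0 ω r * Fm r)) ∂P with hG0Cdef
  have hG0eq : ∀ u : ℝ, 0 ≤ u → G0I u = G0C u := by
    intro u hu
    simp only [hG0Idef, hG0Cdef]
    refine MeasureTheory.integral_congr_ae (Filter.Eventually.of_forall (fun ω => ?_))
    show gam0 ω u * Real.exp (- ∫ r in (0:ℝ)..u, gam0 ω r * Fm r)
        = gam0 ω u * Real.exp (-(∫ r in Set.Ioc (0:ℝ) u, gam0 ω r * Fm r))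
    rw [intervalIntegral.integral_of_le hu]
  have hG0C_joint : Measurable (fun p : ℝ × Ω =>
      gam0 p.2 p.1 * Real.exp (-(∫ r in Set.Ioc (0:ℝ) p.1, gam0 p.2 r * Fm r))) := by
    apply Measurable.mul
    · exact hmgam0.comp (measurable_snd.prodMk measurable_fst)
    · have h1 : Measurable (fun p : ℝ × Ω => ∫ r in Set.Ioc (0:ℝ) p.1, gam0 p.2 r * Fm r) := by
        refine measurable_param_integral ?_ measurable_const measurable_fst
        exact (hmgam0.comp (measurable_fst.snd.prodMk measurable_snd)).mul
          (hFm_meas.comp measurable_snd)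
      exact (h1.neg).exp
  have hG0C_meas : Measurable G0C :=
    (hG0C_joint.stronglyMeasurable.integral_prod_right').measurable
  have hG0C_bd : ∀ u ∈ Set.Icc (0:ℝ) t, |G0C u| ≤ 1 := by
    intro u hu
    have hae : ∀ᵐ ω ∂P,
        ‖gam0 ω u * Real.exp (-(∫ r in Set.Ioc (0:ℝ) u, gam0 ω r * Fm r))‖ ≤ 1 := by
      filter_upwards [hbd] with ω hω
      rw [Real.norm_eq_abs, abs_mul]
      have h1 := hω u hu.1
      have h2 : Real.exp (-(∫ r in Set.Ioc (0:ℝ) u, gam0 ω r * Fm r)) ≤ 1 := by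
        apply Real.exp_le_one_iff.2
        rw [neg_nonpos]
        apply MeasureTheory.setIntegral_nonneg measurableSet_Ioc
        intro r hr
        exact mul_nonneg ((hω r hr.1.le).2.2.1.1)
          ((hFm_bd r ⟨hr.1.le, hr.2.trans hu.2⟩).1)
      rw [abs_of_pos (Real.exp_pos _)]
      calc |gam0 ω u| * Real.exp (-(∫ r in Set.Ioc (0:ℝ) u, gam0 ω r * Fm r))
          ≤ 1 * 1 := by
            apply mul_le_mul _ h2 (Real.exp_pos _).le zero_le_one
            rw [abs_le]
            exact ⟨by linarith [h1.2.2.1.1], h1.2.2.1.2⟩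
        _ = 1 := one_mul 1
    have := MeasureTheory.norm_integral_le_of_norm_le_const hae
    rw [Real.norm_eq_abs] at this
    simp only [hG0Cdef]
    simpa using this
  set GI : ℝ → ℝ → ℝ := fun u s =>
    ∫ ω, gam ω (u - s) * Real.exp (- ∫ r in s..u, gam ω (r - s) * Fm r) ∂P with hGIdef
  set GC : ℝ → ℝ → ℝ := fun u s =>
    ∫ ω, gam ω (u - s) * Real.exp (-(∫ r in Set.Ioc s u, gam ω (r - s) * Fm r)) ∂P with hGCdef
  have hGeq : ∀ u s : ℝ, s ≤ u → GI u s = GC u s := by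
    intro u s hsu
    simp only [hGIdef, hGCdef]
    refine MeasureTheory.integral_congr_ae (Filter.Eventually.of_forall (fun ω => ?_))
    show gam ω (u - s) * Real.exp (- ∫ r in s..u, gam ω (r - s) * Fm r)
        = gam ω (u - s) * Real.exp (-(∫ r in Set.Ioc s u, gam ω (r - s) * Fm r))
    rw [intervalIntegral.integral_of_le hsu]
  have hGC_joint : Measurable (fun p : (ℝ × ℝ) × Ω =>
      gam p.2 (p.1.1 - p.1.2) *
        Real.exp (-(∫ r in Set.Ioc p.1.2 p.1.1, gam p.2 (r - p.1.2) * Fm r))) := by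
    apply Measurable.mul
    · exact hmgam.comp (measurable_snd.prodMk
        (measurable_fst.fst.sub measurable_fst.snd))
    · have h1 : Measurable (fun p : (ℝ × ℝ) × Ω =>
          ∫ r in Set.Ioc p.1.2 p.1.1, gam p.2 (r - p.1.2) * Fm r) := by
        refine measurable_param_integral ?_
          measurable_fst.snd measurable_fst.fst
        refine Measurable.mul ?_ (hFm_meas.comp measurable_snd)
        exact hmgam.comp (measurable_fst.snd.prodMk
          (measurable_snd.sub measurable_fst.fst.snd))
      exact (h1.neg).exp
  have hGC_meas : Measurable (fun p : ℝ × ℝ => GC p.1 p.2) := by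
    have := (hGC_joint.stronglyMeasurable.integral_prod_right' (ν := P)).measurable
    exact this
  have hGC_bd : ∀ u ∈ Set.Icc (0:ℝ) t, ∀ s, 0 ≤ s → s ≤ u → |GC u s| ≤ 1 := by
    intro u hu s hs0 hsu
    have hae : ∀ᵐ ω ∂P,
        ‖gam ω (u - s) * Real.exp (-(∫ r in Set.Ioc s u, gam ω (r - s) * Fm r))‖ ≤ 1 := by
      filter_upwards [hbd] with ω hω
      rw [Real.norm_eq_abs, abs_mul]
      have h1 := hω (u - s) (by linarith)
      have h2 : Real.exp (-(∫ r in Set.Ioc s u, gam ω (r - s) * Fm r)) ≤ 1 := by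
        apply Real.exp_le_one_iff.2
        rw [neg_nonpos]
        apply MeasureTheory.setIntegral_nonneg measurableSet_Ioc
        intro r hr
        apply mul_nonneg
        · exact (hω (r - s) (by linarith [hr.1])).2.2.2.1
        · exact (hFm_bd r ⟨le_trans hs0 hr.1.le, hr.2.trans hu.2⟩).1
      rw [abs_of_pos (Real.exp_pos _)]
      calc |gam ω (u - s)| * Real.exp (-(∫ r in Set.Ioc s u, gam ω (r - s) * Fm r))
          ≤ 1 * 1 := by
            apply mul_le_mul _ h2 (Real.exp_pos _).le zero_le_one
            rw [abs_le]
            exact ⟨by linarith [h1.2.2.2.1], h1.2.2.2.2⟩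
        _ = 1 := one_mul 1
    have := MeasureTheory.norm_integral_le_of_norm_le_const hae
    rw [Real.norm_eq_abs] at this
    simp only [hGCdef]
    simpa using this
  -- rewrite U t with Fm
  have hinner0 : ∀ u : ℝ, 0 ≤ u → ∀ ω,
      (∫ r in (0:ℝ)..u, gam0 ω r * F r) = ∫ r in (0:ℝ)..u, gam0 ω r * Fm r := by
    intro u hu ω
    refine intervalIntegral.integral_congr (fun r hr => ?_)
    rw [Set.uIcc_of_le hu] at hr
    rw [hFm_eq r hr.1]
  have hinners : ∀ s u : ℝ, 0 ≤ s → s ≤ u → ∀ ω,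
      (∫ r in s..u, gam ω (r - s) * F r) = ∫ r in s..u, gam ω (r - s) * Fm r := by
    intro s u hs hsu ω
    refine intervalIntegral.integral_congr (fun r hr => ?_)
    rw [Set.uIcc_of_le hsu] at hr
    rw [hFm_eq r (le_trans hs hr.1)]
  have hUt : U t = (∫ ω, (if etaSup lam0 ω ≤ t then (1:ℝ) else 0) * e0 ω ∂P)
      + ∫ s in (0:ℝ)..t,
          (∫ ω, (if etaSup lam ω ≤ t - s then (1:ℝ) else 0) * esI s ω ∂P) * (S s * F s) := by
    rw [hU t]
    congr 1
    · refine MeasureTheory.integral_congr_ae (Filter.Eventually.of_forall (fun ω => ?_))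
      simp only [he0def]
      rw [hinner0 t ht ω]
    · refine intervalIntegral.integral_congr (fun s hs => ?_)
      rw [Set.uIcc_of_le ht] at hs
      show (∫ ω, (if etaSup lam ω ≤ t - s then (1:ℝ) else 0)
              * Real.exp (- ∫ r in s..t, gam ω (r - s) * F r) ∂P) * (S s * F s)
          = (∫ ω, (if etaSup lam ω ≤ t - s then (1:ℝ) else 0) * esI s ω ∂P) * (S s * F s)
      congr 1
      refine MeasureTheory.integral_congr_ae (Filter.Eventually.of_forall (fun ω => ?_))
      simp only [hesIdef]
      rw [hinners s t hs.1 hs.2 ω]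
  -- absorption for the initially infected term
  set A0 : Set Ω := {ω | (∃ n : ℕ, ∀ q : ℚ, 0 ≤ (q:ℝ) → 0 < lam0 ω q → (q:ℝ) ≤ n) ∧
      (∃ q : ℚ, t < (q:ℝ) ∧ 0 < lam0 ω (q:ℝ))} with hA0def
  have hA0m : MeasurableSet A0 := measurable_etaSet hmlam0 t
  have hiff0 : ∀ᵐ ω ∂P, (t < etaSup lam0 ω ↔ ω ∈ A0) := by
    filter_upwards [hcad] with ω hω
    have h := etaSup_gt_iff (f := lam0 ω) hω.1 ht
    simp only [hA0def, Set.mem_setOf_eq]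
    exact h
  have hbdd0 : ∀ᵐ ω ∂P, |e0 ω| ≤ 1 := by
    filter_upwards [hbd] with ω hω
    simp only [he0def]
    rw [abs_of_pos (Real.exp_pos _)]
    apply Real.exp_le_one_iff.2
    rw [neg_nonpos]
    apply intervalIntegral.integral_nonneg ht
    intro r hr
    exact mul_nonneg ((hω r hr.1).2.2.1.1) ((hFm_bd r hr).1)
  have hone0 : ∀ᵐ ω ∂P, ω ∈ A0 → e0 ω = 1 := by
    filter_upwards [hcad, hbd, hsup0, hiff0] with ω h1 h2 h3 h4
    intro hmem
    have hlt : t < etaSup lam0 ω := h4.2 hmem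
    have hzero : Set.EqOn (fun r => gam0 ω r * Fm r) (fun _ => (0:ℝ)) (Set.uIcc 0 t) := by
      intro r hr
      rw [Set.uIcc_of_le ht] at hr
      have hg00 : gam0 ω r = 0 :=
        gam_eq_zero_of_lt_etaSup (lamP := lam0 ω) (gamP := gam0 ω)
          (fun s u hs hu hls hgu => h3 s u hs hu hls hgu) hr.1 hr.2
          ((h2 r hr.1).2.2.1.1) hlt
      simp [hg00]
    simp only [he0def]
    rw [intervalIntegral.integral_congr hzero]
    simp
  have hind0 : ∀ᵐ ω ∂P,
      ((ω ∈ A0 → (if etaSup lam0 ω ≤ t then (1:ℝ) else 0) = 0) ∧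
       (ω ∉ A0 → (if etaSup lam0 ω ≤ t then (1:ℝ) else 0) = 1)) := by
    filter_upwards [hiff0] with ω hω
    constructor
    · intro hmem
      rw [if_neg (not_le.2 (hω.2 hmem))]
    · intro hmem
      rw [if_pos (not_lt.1 (fun hlt => hmem (hω.1 hlt)))]
  have habs0 : ∫ ω, (if etaSup lam0 ω ≤ t then (1:ℝ) else 0) * e0 ω ∂P
      = (∫ ω, e0 ω ∂P) - (P A0).toReal :=
    absorb hA0m hE0meas.aestronglyMeasurable hbdd0 hone0 hind0
  have hPA0 : P {ω | t < etaSup lam0 ω} = P A0 := by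
    apply measure_congr
    rw [Filter.eventuallyEq_set]
    exact hiff0
  have hIbar : IbarZero P lam0 * FZeroc P lam0 t = (P {ω | t < etaSup lam0 ω}).toReal := by
    rw [FZeroc]
    by_cases h : IbarZero P lam0 = 0
    · rw [h, zero_mul]
      have h1 : P {ω | 0 < etaSup lam0 ω} = 0 := by
        rw [IbarZero] at h
        rcases (ENNReal.toReal_eq_zero_iff _).1 h with h' | h'
        · exact h'
        · exact absurd h' (measure_ne_top P _)
      have h2 : P {ω | t < etaSup lam0 ω} = 0 :=
        measure_mono_null (fun ω hω => lt_of_le_of_lt ht hω) h1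
      rw [h2]
      simp
    · rw [mul_comm, div_mul_cancel₀ _ h]
  -- absorption for the flow term, for each s in [0,t]
  have habs_s : ∀ s ∈ Set.Icc (0:ℝ) t,
      ∫ ω, (if etaSup lam ω ≤ t - s then (1:ℝ) else 0) * esI s ω ∂P
        = ES s - survFc P lam (t - s) := by
    intro s hs
    have hts : (0:ℝ) ≤ t - s := by linarith [hs.2]
    set As : Set Ω := {ω | (∃ n : ℕ, ∀ q : ℚ, 0 ≤ (q:ℝ) → 0 < lam ω q → (q:ℝ) ≤ n) ∧
        (∃ q : ℚ, t - s < (q:ℝ) ∧ 0 < lam ω (q:ℝ))} with hAsdef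
    have hAsm : MeasurableSet As := measurable_etaSet hmlam (t - s)
    have hiffs : ∀ᵐ ω ∂P, (t - s < etaSup lam ω ↔ ω ∈ As) := by
      filter_upwards [hcad] with ω hω
      have h := etaSup_gt_iff (f := lam ω) hω.2.2.1 hts
      simp only [hAsdef, Set.mem_setOf_eq]
      exact h
    have hesmeas : Measurable (fun ω => esI s ω) := by
      have he : (fun ω => esI s ω) = fun ω => esC s ω := funext (hes_eq s hs.2)
      rw [he]
      simp only [hesCdef]
      refine Measurable.exp (Measurable.neg ?_)
      exact measurable_param_integral
        (k := fun (ω : Ω) (r : ℝ) => gam ω (r - s) * Fm r)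
        ((hmgam.comp (measurable_fst.prodMk (measurable_snd.sub measurable_const))).mul
          (hFm_meas.comp measurable_snd)) measurable_const measurable_const
    have hbdds : ∀ᵐ ω ∂P, |esI s ω| ≤ 1 := by
      filter_upwards [hbd] with ω hω
      simp only [hesIdef]
      rw [abs_of_pos (Real.exp_pos _)]
      apply Real.exp_le_one_iff.2
      rw [neg_nonpos]
      apply intervalIntegral.integral_nonneg hs.2
      intro r hr
      apply mul_nonneg
      · exact (hω (r - s) (by linarith [hr.1, hs.1])).2.2.2.1
      · exact (hFm_bd r ⟨le_trans hs.1 hr.1, hr.2⟩).1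
    have hones : ∀ᵐ ω ∂P, ω ∈ As → esI s ω = 1 := by
      filter_upwards [hcad, hbd, hsup, hiffs] with ω h1 h2 h3 h4
      intro hmem
      have hlt : t - s < etaSup lam ω := h4.2 hmem
      have hzero : Set.EqOn (fun r => gam ω (r - s) * Fm r) (fun _ => (0:ℝ))
          (Set.uIcc s t) := by
        intro r hr
        rw [Set.uIcc_of_le hs.2] at hr
        have hgz : gam ω (r - s) = 0 :=
          gam_eq_zero_of_lt_etaSup (lamP := lam ω) (gamP := gam ω)
            (fun a u ha hu hla hgu => h3 a u ha hu hla hgu)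
            (by linarith [hr.1]) (by linarith [hr.2])
            ((h2 (r - s) (by linarith [hr.1, hs.1])).2.2.2.1) hlt
        simp [hgz]
      simp only [hesIdef]
      rw [intervalIntegral.integral_congr hzero]
      simp
    have hinds : ∀ᵐ ω ∂P,
        ((ω ∈ As → (if etaSup lam ω ≤ t - s then (1:ℝ) else 0) = 0) ∧
         (ω ∉ As → (if etaSup lam ω ≤ t - s then (1:ℝ) else 0) = 1)) := by
      filter_upwards [hiffs] with ω hω
      constructor
      · intro hmem
        rw [if_neg (not_le.2 (hω.2 hmem))]
      · intro hmem
        rw [if_pos (not_lt.1 (fun hlt => hmem (hω.1 hlt)))]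
    have habs := absorb hAsm hesmeas.aestronglyMeasurable hbdds hones hinds
    have hPAs : P {ω | t - s < etaSup lam ω} = P As := by
      apply measure_congr
      rw [Filter.eventuallyEq_set]
      exact hiffs
    have hES' : ∫ ω, esI s ω ∂P = ES s := by
      simp only [hESdef]
      exact MeasureTheory.integral_congr_ae
        (Filter.Eventually.of_forall (fun ω => hes_eq s hs.2 ω))
    rw [habs, hES', survFc, hPAs]
  -- basic interval integrabilities
  have hWint : IntervalIntegrable W volume 0 t :=
    bdd_intervalIntegrable ht hW_meas hW_bd
  have hESWint : IntervalIntegrable (fun s => ES s * W s) volume 0 t := by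
    refine bdd_intervalIntegrable (C := 1 * (CS * CF)) ht (hES_meas.mul hW_meas) ?_
    intro s hsm
    rw [abs_mul]
    exact mul_le_mul (hES_bd s hsm) (hW_bd s hsm) (abs_nonneg _) zero_le_one
  have hsurvmono : Monotone (fun s : ℝ => survFc P lam (t - s)) := by
    intro s1 s2 h
    simp only [survFc]
    apply ENNReal.toReal_mono (measure_ne_top P _)
    apply measure_mono
    intro ω hω
    simp only [Set.mem_setOf_eq] at hω ⊢
    exact lt_of_le_of_lt (by linarith) hω
  have hsurv_bd : ∀ x : ℝ, |survFc P lam x| ≤ 1 := by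
    intro x
    rw [survFc, abs_of_nonneg ENNReal.toReal_nonneg]
    calc (P {ω | x < etaSup lam ω}).toReal ≤ (P Set.univ).toReal :=
        ENNReal.toReal_mono (measure_ne_top P _) (measure_mono (Set.subset_univ _))
      _ = 1 := by simp
  have hsurvWint : IntervalIntegrable (fun s => survFc P lam (t - s) * W s) volume 0 t := by
    refine bdd_intervalIntegrable (C := 1 * (CS * CF)) ht (hsurvmono.measurable.mul hW_meas) ?_
    intro s hsm
    rw [abs_mul]
    exact mul_le_mul (hsurv_bd _) (hW_bd s hsm) (abs_nonneg _) zero_le_one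
  -- combine the two s-integrals
  have hsum2 : (∫ s in (0:ℝ)..t,
        (∫ ω, (if etaSup lam ω ≤ t - s then (1:ℝ) else 0) * esI s ω ∂P) * (S s * F s))
      + (∫ s in (0:ℝ)..t, survFc P lam (t - s) * (S s * F s))
      = ∫ s in (0:ℝ)..t, ES s * W s := by
    have e1 : ∫ s in (0:ℝ)..t,
        (∫ ω, (if etaSup lam ω ≤ t - s then (1:ℝ) else 0) * esI s ω ∂P) * (S s * F s)
        = ∫ s in (0:ℝ)..t, (ES s * W s - survFc P lam (t - s) * W s) := by
      refine intervalIntegral.integral_congr (fun s hsm => ?_)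
      rw [Set.uIcc_of_le ht] at hsm
      show (∫ ω, (if etaSup lam ω ≤ t - s then (1:ℝ) else 0) * esI s ω ∂P) * (S s * F s)
          = ES s * W s - survFc P lam (t - s) * W s
      rw [habs_s s hsm, ← hW_eq s hsm.1]
      ring
    have e2 : ∫ s in (0:ℝ)..t, survFc P lam (t - s) * (S s * F s)
        = ∫ s in (0:ℝ)..t, survFc P lam (t - s) * W s := by
      refine intervalIntegral.integral_congr (fun s hsm => ?_)
      rw [Set.uIcc_of_le ht] at hsm
      show survFc P lam (t - s) * (S s * F s) = survFc P lam (t - s) * W s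
      rw [hW_eq s hsm.1]
    rw [e1, e2, intervalIntegral.integral_sub hESWint hsurvWint]
    ring
  have hsum1 : (∫ ω, (if etaSup lam0 ω ≤ t then (1:ℝ) else 0) * e0 ω ∂P)
      + IbarZero P lam0 * FZeroc P lam0 t = ∫ ω, e0 ω ∂P := by
    rw [habs0, hIbar, hPA0]
    ring
  -- key expectation identities
  have hgood0 : ∀ᵐ ω ∂P, (∀ u ∈ Set.Icc (0:ℝ) t, 0 ≤ gam0 ω u ∧ gam0 ω u ≤ 1) ∧
      (∀ u ∈ Set.Ico (0:ℝ) t, ContinuousWithinAt (fun r => gam0 ω r) (Set.Ici u) u) := by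
    filter_upwards [hcad, hbd] with ω h1 h2
    constructor
    · intro u hu
      exact ⟨(h2 u hu.1).2.2.1.1, (h2 u hu.1).2.2.1.2⟩
    · intro u hu
      exact h1.2.1.1 u hu.1
  have hE0id : ∫ ω, e0 ω ∂P = 1 - ∫ u in (0:ℝ)..t, Fm u * G0I u := by
    have hid := exp_expectation_identity (P := P) (g := gam0) hmgam0 hFm_meas ht hFm_bd
      (fun u hu => hFm_rc u hu.1) hgood0
    simp only [he0def, hG0Idef]
    exact hid
  have hESid : ∀ s ∈ Set.Icc (0:ℝ) t, ES s = 1 - ∫ u in s..t, Fm u * GI u s := by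
    intro s hsm
    have hgoods : ∀ᵐ ω ∂P, (∀ u ∈ Set.Icc s t, 0 ≤ gam ω (u - s) ∧ gam ω (u - s) ≤ 1) ∧
        (∀ u ∈ Set.Ico s t, ContinuousWithinAt (fun r => gam ω (r - s)) (Set.Ici u) u) := by
      filter_upwards [hcad, hbd] with ω h1 h2
      constructor
      · intro u hu
        exact ⟨(h2 (u - s) (by linarith [hu.1, hsm.1])).2.2.2.1,
          (h2 (u - s) (by linarith [hu.1, hsm.1])).2.2.2.2⟩
      · intro u hu
        have hc1 : ContinuousWithinAt (gam ω) (Set.Ici (u - s)) (u - s) :=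
          h1.2.2.2.1 (u - s) (by linarith [hu.1, hsm.1])
        have hc2 : ContinuousWithinAt (fun r : ℝ => r - s) (Set.Ici u) u :=
          (continuous_id.sub continuous_const).continuousWithinAt
        have hmaps : Set.MapsTo (fun r : ℝ => r - s) (Set.Ici u) (Set.Ici (u - s)) := by
          intro r hr
          simp only [Set.mem_Ici] at hr ⊢
          linarith
        have hcomp := ContinuousWithinAt.comp (g := gam ω) (f := fun r : ℝ => r - s)
          (s := Set.Ici u) (t := Set.Ici (u - s)) (x := u) hc1 hc2 hmaps
        exact hcomp
    have hid := exp_expectation_identity (P := P) (g := fun ω u => gam ω (u - s))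
      (hmgam.comp (measurable_fst.prodMk (measurable_snd.sub measurable_const)))
      hFm_meas hsm.2 (fun u hu => hFm_bd u ⟨le_trans hsm.1 hu.1, hu.2⟩)
      (fun u hu => hFm_rc u (le_trans hsm.1 hu.1)) hgoods
    have hL : ES s = ∫ ω, Real.exp (-∫ r in s..t, gam ω (r - s) * Fm r) ∂P := by
      simp only [hESdef, hesCdef]
      refine MeasureTheory.integral_congr_ae (Filter.Eventually.of_forall (fun ω => ?_))
      show Real.exp (-(∫ r in Set.Ioc s t, gam ω (r - s) * Fm r))
          = Real.exp (-∫ r in s..t, gam ω (r - s) * Fm r)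
      rw [intervalIntegral.integral_of_le hsm.2]
    rw [hL, hid]
  -- the S equation in the modified variables
  have hSid : ∀ u ∈ Set.Icc (0:ℝ) t, S u = G0I u + ∫ s in (0:ℝ)..u, GI u s * W s := by
    intro u hu
    rw [hSeq u hu.1]
    congr 1
    · simp only [hG0Idef]
      refine MeasureTheory.integral_congr_ae (Filter.Eventually.of_forall (fun ω => ?_))
      show gam0 ω u * Real.exp (- ∫ r in (0:ℝ)..u, gam0 ω r * F r)
          = gam0 ω u * Real.exp (- ∫ r in (0:ℝ)..u, gam0 ω r * Fm r)
      rw [hinner0 u hu.1 ω]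
    · refine intervalIntegral.integral_congr (fun s hsm => ?_)
      rw [Set.uIcc_of_le hu.1] at hsm
      show (∫ ω, gam ω (u - s) * Real.exp (- ∫ r in s..u, gam ω (r - s) * F r) ∂P)
            * (S s * F s) = GI u s * W s
      rw [hW_eq s hsm.1]
      congr 1
      simp only [hGIdef]
      refine MeasureTheory.integral_congr_ae (Filter.Eventually.of_forall (fun ω => ?_))
      show gam ω (u - s) * Real.exp (- ∫ r in s..u, gam ω (r - s) * F r)
          = gam ω (u - s) * Real.exp (- ∫ r in s..u, gam ω (r - s) * Fm r)
      rw [hinners s u hsm.1 hsm.2 ω]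
  -- integrabilities for the final computation
  have hFmG0int : IntervalIntegrable (fun u => Fm u * G0C u) volume 0 t := by
    refine bdd_intervalIntegrable (C := CF * 1) ht (hFm_meas.mul hG0C_meas) ?_
    intro u hu
    rw [abs_mul]
    apply mul_le_mul _ (hG0C_bd u hu) (abs_nonneg _) hCF0
    rw [abs_of_nonneg (hFm_bd u hu).1]
    exact (hFm_bd u hu).2
  have hT1 : ∫ u in (0:ℝ)..t, Fm u * G0I u = ∫ u in (0:ℝ)..t, Fm u * G0C u := by
    refine intervalIntegral.integral_congr (fun u hu => ?_)
    rw [Set.uIcc_of_le ht] at hu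
    show Fm u * G0I u = Fm u * G0C u
    rw [hG0eq u hu.1]
  have hFmSmint : IntervalIntegrable (fun u => Fm u * Sm u) volume 0 t := by
    refine bdd_intervalIntegrable (C := CF * CS) ht (hFm_meas.mul hSm_meas) ?_
    intro u hu
    rw [abs_mul]
    apply mul_le_mul _ _ (abs_nonneg _) hCF0
    · rw [abs_of_nonneg (hFm_bd u hu).1]
      exact (hFm_bd u hu).2
    · rw [abs_of_nonneg (hSm_bd u hu).1]
      exact (hSm_bd u hu).2
  -- the triangle swap
  have hphi_meas : Measurable (Function.uncurry (fun u s => Fm u * GC u s * W s)) :=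
    ((hFm_meas.comp measurable_fst).mul hGC_meas).mul (hW_meas.comp measurable_snd)
  have hphi_bd : ∀ u ∈ Set.Icc (0:ℝ) t, ∀ s ∈ Set.Icc (0:ℝ) t, s < u →
      |Fm u * GC u s * W s| ≤ CF * 1 * (CS * CF) := by
    intro u hu s hsm hlt
    rw [abs_mul, abs_mul]
    apply mul_le_mul _ (hW_bd s hsm) (abs_nonneg _) (by positivity)
    apply mul_le_mul _ (hGC_bd u hu s hsm.1 hlt.le) (abs_nonneg _) hCF0
    rw [abs_of_nonneg (hFm_bd u hu).1]
    exact (hFm_bd u hu).2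
  have hswap := triangle_swap (φ := fun u s => Fm u * GC u s * W s)
    (C := CF * 1 * (CS * CF)) ht (by positivity) hphi_meas hphi_bd
  -- identify the double integral
  have hJW_int : IntervalIntegrable (fun s => (∫ u in s..t, Fm u * GI u s) * W s) volume 0 t := by
    have h1 : IntervalIntegrable (fun s => (1 - ES s) * W s) volume 0 t := by
      refine bdd_intervalIntegrable (C := 2 * (CS * CF)) ht
        ((measurable_const.sub hES_meas).mul hW_meas) ?_
      intro s hsm
      rw [abs_mul]
      apply mul_le_mul _ (hW_bd s hsm) (abs_nonneg _) (by norm_num)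
      calc |1 - ES s| ≤ |(1:ℝ)| + |ES s| := abs_sub _ _
        _ ≤ 1 + 1 := by
            rw [abs_one]
            exact add_le_add le_rfl (hES_bd s hsm)
        _ = 2 := by norm_num
    rw [intervalIntegrable_iff_integrableOn_Ioc_of_le ht] at h1 ⊢
    refine h1.congr_fun (fun s hsm => ?_) measurableSet_Ioc
    have hsm' : s ∈ Set.Icc (0:ℝ) t := ⟨hsm.1.le, hsm.2⟩
    show (1 - ES s) * W s = (∫ u in s..t, Fm u * GI u s) * W s
    rw [hESid s hsm']
    ring
  have hJWval : ∫ s in (0:ℝ)..t, (∫ u in s..t, Fm u * GI u s) * W s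
      = ∫ u in (0:ℝ)..t, (Fm u * Sm u - Fm u * G0C u) := by
    have d1 : ∫ s in (0:ℝ)..t, (∫ u in s..t, Fm u * GI u s) * W s
        = ∫ s in (0:ℝ)..t, ∫ u in s..t, Fm u * GC u s * W s := by
      refine intervalIntegral.integral_congr (fun s hsm => ?_)
      rw [Set.uIcc_of_le ht] at hsm
      show (∫ u in s..t, Fm u * GI u s) * W s = ∫ u in s..t, Fm u * GC u s * W s
      rw [← intervalIntegral.integral_mul_const]
      refine intervalIntegral.integral_congr (fun u hu => ?_)
      rw [Set.uIcc_of_le hsm.2] at hu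
      show Fm u * GI u s * W s = Fm u * GC u s * W s
      rw [hGeq u s hu.1]
    have d2 : ∫ u in (0:ℝ)..t, ∫ s in (0:ℝ)..u, Fm u * GC u s * W s
        = ∫ u in (0:ℝ)..t, (Fm u * Sm u - Fm u * G0C u) := by
      refine intervalIntegral.integral_congr (fun u hu => ?_)
      rw [Set.uIcc_of_le ht] at hu
      show (∫ s in (0:ℝ)..u, Fm u * GC u s * W s) = Fm u * Sm u - Fm u * G0C u
      have d3 : ∫ s in (0:ℝ)..u, Fm u * GC u s * W s
          = ∫ s in (0:ℝ)..u, Fm u * (GI u s * W s) := by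
        refine intervalIntegral.integral_congr (fun s hsm => ?_)
        rw [Set.uIcc_of_le hu.1] at hsm
        show Fm u * GC u s * W s = Fm u * (GI u s * W s)
        rw [← hGeq u s hsm.2]
        ring
      rw [d3, intervalIntegral.integral_const_mul]
      have d4 : ∫ s in (0:ℝ)..u, GI u s * W s = S u - G0I u := by
        have := hSid u hu
        linarith
      rw [d4, hSm_eq u hu.1, hG0eq u hu.1]
      ring
    rw [d1, hswap, d2]
  -- final computation
  rw [hUt, hI t]
  have hfinal : (∫ ω, e0 ω ∂P) + ∫ s in (0:ℝ)..t, ES s * W s = 1 := by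
    have e3 : ∫ s in (0:ℝ)..t, ES s * W s
        = (∫ s in (0:ℝ)..t, W s) - ∫ s in (0:ℝ)..t, (∫ u in s..t, Fm u * GI u s) * W s := by
      have e4 : ∫ s in (0:ℝ)..t, ES s * W s
          = ∫ s in (0:ℝ)..t, (W s - (∫ u in s..t, Fm u * GI u s) * W s) := by
        refine intervalIntegral.integral_congr (fun s hsm => ?_)
        rw [Set.uIcc_of_le ht] at hsm
        show ES s * W s = W s - (∫ u in s..t, Fm u * GI u s) * W s
        rw [hESid s hsm]
        ring
      rw [e4, intervalIntegral.integral_sub hWint hJW_int]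
    have e5 : ∫ s in (0:ℝ)..t, W s = ∫ u in (0:ℝ)..t, Fm u * Sm u := by
      refine intervalIntegral.integral_congr (fun s hsm => ?_)
      show W s = Fm s * Sm s
      simp only [hWdef]
      ring
    have e6 : ∫ u in (0:ℝ)..t, (Fm u * Sm u - Fm u * G0C u)
        = (∫ u in (0:ℝ)..t, Fm u * Sm u) - ∫ u in (0:ℝ)..t, Fm u * G0C u :=
      intervalIntegral.integral_sub hFmSmint hFmG0int
    rw [hE0id, hT1, e3, hJWval, e5, e6]
    ring
  linarith [hsum1, hsum2, hfinal]


end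
end
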